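/- arXiv:0810.1793 — 7 statements merged into one kernel-verified Lean document; each statement's English description precedes it below -/
import Mathlib

section
/- Let J ≥ 1 and let B = { ±(e_{j1} + e_{j4} − e_{j2} − e_{j3}) : 1 ≤ j1 < j2 ≤ j3 < j4 ≤ J, j2 − j1 = j4 − j3 }. Then B is a Markov basis for the univariate Poisson regression configuration: for any x, y ∈ ℕ^J with Σ_{j=1}^J x_j = Σ_{j=1}^J y_j and Σ_{j=1}^J j·x_j = Σ_{j=1}^J j·y_j, there exists a finite sequence x = x^0, x^1, …, x^n = y of vectors in ℕ^J such that x^{i+1} − x^i ∈ B for every i (hence every x^i lies in the common fiber). -/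
namespace MBaux

def mvB (J : ℕ) : Set (Fin J → ℤ) :=
  {z : Fin J → ℤ | ∃ j1 j2 j3 j4 : Fin J,
      j1 < j2 ∧ j2 ≤ j3 ∧ j3 < j4 ∧
      (j2 : ℕ) - (j1 : ℕ) = (j4 : ℕ) - (j3 : ℕ) ∧
      (z = Pi.single j1 (1 : ℤ) + Pi.single j4 (1 : ℤ)
            - Pi.single j2 (1 : ℤ) - Pi.single j3 (1 : ℤ) ∨
       z = -(Pi.single j1 (1 : ℤ) + Pi.single j4 (1 : ℤ)
            - Pi.single j2 (1 : ℤ) - Pi.single j3 (1 : ℤ)))}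

variable {J : ℕ}

def Step (x y : Fin J → ℕ) : Prop := (fun j => (y j : ℤ) - x j) ∈ mvB J

lemma step_symm : Symmetric (Step (J := J)) := by
  rintro x y ⟨j1, j2, j3, j4, h12, h23, h34, hd, h | h⟩
  · refine ⟨j1, j2, j3, j4, h12, h23, h34, hd, Or.inr ?_⟩
    funext j
    have := congrFun h j
    simp only [Pi.neg_apply]
    linarith [this]
  · refine ⟨j1, j2, j3, j4, h12, h23, h34, hd, Or.inl ?_⟩
    funext j
    have := congrFun h j
    simp only [Pi.neg_apply] at this ⊢
    linarith [this]

lemma mvB_sums {z : Fin J → ℤ} (hz : z ∈ mvB J) :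
    (∑ j : Fin J, z j = 0) ∧ (∑ j : Fin J, ((j : ℕ) + 1 : ℤ) * z j = 0) := by
  obtain ⟨j1, j2, j3, j4, h12, h23, h34, hd, h⟩ := hz
  have key : ((j1 : ℕ) : ℤ) + (j4 : ℕ) = ((j2 : ℕ) : ℤ) + (j3 : ℕ) := by
    have a1 : (j1 : ℕ) < (j2 : ℕ) := h12
    have a2 : (j3 : ℕ) < (j4 : ℕ) := h34
    omega
  set w : Fin J → ℤ := Pi.single j1 (1 : ℤ) + Pi.single j4 (1 : ℤ)
            - Pi.single j2 (1 : ℤ) - Pi.single j3 (1 : ℤ) with hw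
  have base : (∑ j : Fin J, w j = 0) ∧
      (∑ j : Fin J, ((j : ℕ) + 1 : ℤ) * w j = 0) := by
    constructor
    · simp only [hw, Pi.add_apply, Pi.sub_apply, Finset.sum_sub_distrib, Finset.sum_add_distrib,
        Pi.single_apply, Finset.sum_ite_eq', Finset.mem_univ, if_true]
      ring
    · simp only [hw, Pi.add_apply, Pi.sub_apply, mul_add, mul_sub, Finset.sum_sub_distrib,
        Finset.sum_add_distrib, Pi.single_apply, mul_ite, mul_one, mul_zero,
        Finset.sum_ite_eq', Finset.mem_univ, if_true]
      linarith [key]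
  rcases h with h | h <;> subst h
  · exact base
  · constructor
    · simp only [Pi.neg_apply, Finset.sum_neg_distrib]
      rw [base.1]; ring
    · simp only [Pi.neg_apply, mul_neg, Finset.sum_neg_distrib]
      rw [base.2]; ring

lemma step_stats {x y : Fin J → ℕ} (h : Step x y) :
    (∑ j : Fin J, x j = ∑ j : Fin J, y j) ∧
    (∑ j : Fin J, ((j : ℕ) + 1) * x j = ∑ j : Fin J, ((j : ℕ) + 1) * y j) := by
  obtain ⟨h1, h2⟩ := mvB_sums h
  rw [Finset.sum_sub_distrib] at h1
  simp only [mul_sub, Finset.sum_sub_distrib] at h2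
  constructor
  · have : (∑ j : Fin J, (x j : ℤ)) = ∑ j : Fin J, (y j : ℤ) := by linarith
    exact_mod_cast this
  · have : (∑ j : Fin J, ((j : ℕ) + 1 : ℤ) * x j)
        = ∑ j : Fin J, ((j : ℕ) + 1 : ℤ) * y j := by linarith
    exact_mod_cast this

lemma chain_stats {x y : Fin J → ℕ} (h : Relation.ReflTransGen Step x y) :
    (∑ j : Fin J, x j = ∑ j : Fin J, y j) ∧
    (∑ j : Fin J, ((j : ℕ) + 1) * x j = ∑ j : Fin J, ((j : ℕ) + 1) * y j) := by
  induction h with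
  | refl => exact ⟨rfl, rfl⟩
  | tail _ hstep ih => exact ⟨ih.1.trans (step_stats hstep).1, ih.2.trans (step_stats hstep).2⟩

def Φ (x : Fin J → ℕ) : ℕ := ∑ j : Fin J, ((j : ℕ) + 1) ^ 2 * x j

def Terminal (x : Fin J → ℕ) : Prop :=
  ∀ a d : Fin J, x a ≠ 0 → x d ≠ 0 → (d : ℕ) ≤ (a : ℕ) + 1

section squeeze

variable (x : Fin J → ℕ) (a a2 d2 d : Fin J)

def squeezed : Fin J → ℕ := fun j =>
  x j + (if j = a2 then 1 else 0) + (if j = d2 then 1 else 0)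
      - (if j = a then 1 else 0) - (if j = d then 1 else 0)

variable {x a a2 d2 d}
variable (ha : x a ≠ 0) (hd : x d ≠ 0) (h2 : (a : ℕ) + 2 ≤ (d : ℕ))
  (e2 : (a2 : ℕ) = (a : ℕ) + 1) (e3 : (d2 : ℕ) + 1 = (d : ℕ))

include ha hd h2 e2 e3

lemma squeezed_cast : ∀ j : Fin J, (squeezed x a a2 d2 d j : ℤ) =
    (x j : ℤ) + (if j = a2 then 1 else 0) + (if j = d2 then 1 else 0)
        - (if j = a then 1 else 0) - (if j = d then 1 else 0) := by
  intro j
  have h1 : 1 ≤ x a := Nat.one_le_iff_ne_zero.mpr ha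
  have h1' : 1 ≤ x d := Nat.one_le_iff_ne_zero.mpr hd
  by_cases ja : j = a
  · subst ja
    simp only [squeezed, Fin.ext_iff]
    split_ifs <;> omega
  · by_cases jd : j = d
    · subst jd
      simp only [squeezed, if_neg ja, Fin.ext_iff]
      split_ifs <;> omega
    · simp only [squeezed, if_neg ja, if_neg jd]
      split_ifs <;> omega
lemma squeezed_step : Step x (squeezed x a a2 d2 d) := by
  refine ⟨a, a2, d2, d, ?_, ?_, ?_, ?_, Or.inr ?_⟩
  · show (a : ℕ) < (a2 : ℕ); omega
  · show (a2 : ℕ) ≤ (d2 : ℕ); omega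
  · show (d2 : ℕ) < (d : ℕ); omega
  · omega
  · funext j
    rw [squeezed_cast ha hd h2 e2 e3 j]
    simp only [Pi.neg_apply, Pi.add_apply, Pi.sub_apply, Pi.single_apply]
    split_ifs <;> ring

lemma squeezed_phi : Φ (squeezed x a a2 d2 d) + 2 ≤ Φ x := by
  have key : (Φ (squeezed x a a2 d2 d) : ℤ)
      = (Φ x : ℤ) + ((a2 : ℕ) + 1 : ℤ) ^ 2 + ((d2 : ℕ) + 1 : ℤ) ^ 2
        - ((a : ℕ) + 1 : ℤ) ^ 2 - ((d : ℕ) + 1 : ℤ) ^ 2 := by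
    have hΦ : ∀ z : Fin J → ℕ, (Φ z : ℤ) = ∑ j : Fin J, ((j : ℕ) + 1 : ℤ) ^ 2 * z j := by
      intro z; simp only [Φ]; push_cast; rfl
    rw [hΦ, hΦ]
    calc ∑ j : Fin J, ((j : ℕ) + 1 : ℤ) ^ 2 * (squeezed x a a2 d2 d j : ℤ)
        = ∑ j : Fin J, (((j : ℕ) + 1 : ℤ) ^ 2 * x j
            + ((j : ℕ) + 1 : ℤ) ^ 2 * (if j = a2 then (1:ℤ) else 0)
            + ((j : ℕ) + 1 : ℤ) ^ 2 * (if j = d2 then (1:ℤ) else 0)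
            - ((j : ℕ) + 1 : ℤ) ^ 2 * (if j = a then (1:ℤ) else 0)
            - ((j : ℕ) + 1 : ℤ) ^ 2 * (if j = d then (1:ℤ) else 0)) := by
          refine Finset.sum_congr rfl fun j _ => ?_
          rw [squeezed_cast ha hd h2 e2 e3 j]; ring
      _ = _ := by
          simp only [Finset.sum_sub_distrib, Finset.sum_add_distrib, mul_ite, mul_one, mul_zero,
            Finset.sum_ite_eq', Finset.mem_univ, if_true]
  have hineq : ((a2 : ℕ) + 1 : ℤ) ^ 2 + ((d2 : ℕ) + 1 : ℤ) ^ 2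
      - ((a : ℕ) + 1 : ℤ) ^ 2 - ((d : ℕ) + 1 : ℤ) ^ 2 ≤ -2 := by
    have ea : ((a2 : ℕ) : ℤ) = (a : ℕ) + 1 := by exact_mod_cast e2
    have ed : ((d2 : ℕ) : ℤ) + 1 = (d : ℕ) := by exact_mod_cast e3
    have h2' : ((a : ℕ) : ℤ) + 2 ≤ (d : ℕ) := by exact_mod_cast h2
    nlinarith [ea, ed, h2']
  have : (Φ (squeezed x a a2 d2 d) : ℤ) + 2 ≤ (Φ x : ℤ) := by linarith
  exact_mod_cast this

end squeeze

lemma reach_terminal_aux : ∀ (N : ℕ) (x : Fin J → ℕ), Φ x ≤ N →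
    ∃ t, Relation.ReflTransGen Step x t ∧ Terminal t := by
  intro N
  induction N with
  | zero =>
      intro x hx
      refine ⟨x, Relation.ReflTransGen.refl, fun a d hha hhd => ?_⟩
      exfalso
      have h0 := Finset.sum_eq_zero_iff.mp (Nat.le_zero.mp hx) a (Finset.mem_univ a)
      exact Nat.mul_ne_zero (by positivity) hha h0
  | succ N ih =>
      intro x hx
      by_cases hterm : Terminal x
      · exact ⟨x, Relation.ReflTransGen.refl, hterm⟩
      · simp only [Terminal, not_forall] at hterm
        obtain ⟨a, d, ha, hd, hlt⟩ := hterm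
        have h2 : (a : ℕ) + 2 ≤ (d : ℕ) := by omega
        have hd1 : (a : ℕ) + 1 < J := by
          have := d.isLt; omega
        have hd2 : (d : ℕ) - 1 < J := by
          have := d.isLt; omega
        set a2 : Fin J := ⟨(a : ℕ) + 1, hd1⟩ with ha2
        set d2 : Fin J := ⟨(d : ℕ) - 1, hd2⟩ with hd2'
        have e2 : (a2 : ℕ) = (a : ℕ) + 1 := rfl
        have e3 : (d2 : ℕ) + 1 = (d : ℕ) := by simp [hd2']; omega
        have hstep := squeezed_step (x := x) ha hd h2 e2 e3
        have hphi := squeezed_phi (x := x) ha hd h2 e2 e3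
        obtain ⟨t, ht, htt⟩ := ih (squeezed x a a2 d2 d) (by omega)
        exact ⟨t, Relation.ReflTransGen.head hstep ht, htt⟩

lemma reach_terminal (x : Fin J → ℕ) :
    ∃ t, Relation.ReflTransGen Step x t ∧ Terminal t :=
  reach_terminal_aux (Φ x) x le_rfl

lemma chain_symm {x y : Fin J → ℕ} (h : Relation.ReflTransGen Step x y) :
    Relation.ReflTransGen Step y x := by
  induction h with
  | refl => exact Relation.ReflTransGen.refl
  | tail _ hstep ih => exact Relation.ReflTransGen.head (step_symm hstep) ih

lemma terminal_entries {s : Fin J → ℕ} (hs : Terminal s) (hn : ∃ j, s j ≠ 0) :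
    ∃ (k : Fin J) (R : ℤ), 0 ≤ R ∧ 1 ≤ s k ∧
      (∑ j : Fin J, (s j : ℤ)) = (s k : ℤ) + R ∧
      (∑ j : Fin J, ((j : ℕ) + 1 : ℤ) * s j) = ((k : ℕ) + 1) * (∑ j : Fin J, (s j : ℤ)) + R ∧
      (∀ j : Fin J, (s j : ℤ) = if (j : ℕ) = (k : ℕ) + 1 then R
          else if (j : ℕ) = (k : ℕ) then (∑ i : Fin J, (s i : ℤ)) - R else 0) := by
  classical
  obtain ⟨j0, hj0⟩ := hn
  set supp : Finset (Fin J) := Finset.univ.filter (fun j => s j ≠ 0) with hsupp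
  have hne : supp.Nonempty := ⟨j0, by simp [hsupp, hj0]⟩
  set k : Fin J := supp.min' hne with hk
  have hk0 : s k ≠ 0 := by
    have := supp.min'_mem hne
    simp only [hsupp, Finset.mem_filter, Finset.mem_univ, true_and] at this
    exact this
  have hkmin : ∀ j : Fin J, s j ≠ 0 → (k : ℕ) ≤ (j : ℕ) := by
    intro j hj
    exact supp.min'_le j (by simp [hsupp, hj])
  have hkmax : ∀ j : Fin J, s j ≠ 0 → (j : ℕ) ≤ (k : ℕ) + 1 := fun j hj => hs k j hk0 hj
  set R : ℤ := ∑ j : Fin J, (if (j : ℕ) = (k : ℕ) + 1 then (s j : ℤ) else 0) with hR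
  have hR0 : 0 ≤ R := Finset.sum_nonneg fun j _ => by positivity
  have hpoint : ∀ j : Fin J, (s j : ℤ) =
      (if (j : ℕ) = (k : ℕ) then (s j : ℤ) else 0)
      + (if (j : ℕ) = (k : ℕ) + 1 then (s j : ℤ) else 0) := by
    intro j
    by_cases hj : s j = 0
    · simp [hj]
    · have l1 := hkmin j hj
      have l2 := hkmax j hj
      split_ifs <;> omega
  have hsk : (∑ j : Fin J, (if (j : ℕ) = (k : ℕ) then (s j : ℤ) else 0)) = (s k : ℤ) := by
    simp only [Fin.val_eq_val, Finset.sum_ite_eq', Finset.mem_univ, if_true]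
  have hN : (∑ j : Fin J, (s j : ℤ)) = (s k : ℤ) + R := by
    calc (∑ j : Fin J, (s j : ℤ))
        = ∑ j : Fin J, ((if (j : ℕ) = (k : ℕ) then (s j : ℤ) else 0)
            + (if (j : ℕ) = (k : ℕ) + 1 then (s j : ℤ) else 0)) :=
          Finset.sum_congr rfl fun j _ => hpoint j
      _ = (s k : ℤ) + R := by rw [Finset.sum_add_distrib, hsk, hR]
  have hM : (∑ j : Fin J, ((j : ℕ) + 1 : ℤ) * s j)
      = ((k : ℕ) + 1) * (∑ j : Fin J, (s j : ℤ)) + R := by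
    have hpt : ∀ j : Fin J, ((j : ℕ) + 1 : ℤ) * s j
        = ((k : ℕ) + 1 : ℤ) * s j + (if (j : ℕ) = (k : ℕ) + 1 then (s j : ℤ) else 0) := by
      intro j
      by_cases hj : s j = 0
      · simp [hj]
      · have l1 := hkmin j hj
        have l2 := hkmax j hj
        have : (j : ℕ) = (k : ℕ) ∨ (j : ℕ) = (k : ℕ) + 1 := by omega
        rcases this with e | e
        · have e' : ((j : ℕ) : ℤ) = ((k : ℕ) : ℤ) := by exact_mod_cast e
          rw [if_neg (by omega), e']; ring
        · have e' : ((j : ℕ) : ℤ) = ((k : ℕ) : ℤ) + 1 := by exact_mod_cast e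
          rw [if_pos e, e']; ring
    calc (∑ j : Fin J, ((j : ℕ) + 1 : ℤ) * s j)
        = ∑ j : Fin J, (((k : ℕ) + 1 : ℤ) * s j
            + (if (j : ℕ) = (k : ℕ) + 1 then (s j : ℤ) else 0)) :=
          Finset.sum_congr rfl fun j _ => hpt j
      _ = _ := by rw [Finset.sum_add_distrib, ← Finset.mul_sum, hR]
  refine ⟨k, R, hR0, Nat.one_le_iff_ne_zero.mpr hk0, hN, hM, ?_⟩
  intro j
  by_cases c1 : (j : ℕ) = (k : ℕ) + 1
  · rw [if_pos c1, hR]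
    simp only [← c1, Fin.val_eq_val, Finset.sum_ite_eq', Finset.mem_univ, if_true]
  · by_cases c2 : (j : ℕ) = (k : ℕ)
    · have hjk : j = k := Fin.ext c2
      rw [if_neg c1, if_pos c2, hjk]
      linarith [hN]
    · have hj : s j = 0 := by
        by_contra hj
        have := hkmin j hj
        have := hkmax j hj
        omega
      rw [if_neg c1, if_neg c2]
      exact_mod_cast congrArg (Nat.cast (R := ℤ)) hj

lemma terminal_eq {s t : Fin J → ℕ} (hs : Terminal s) (ht : Terminal t)
    (h1 : ∑ j : Fin J, s j = ∑ j : Fin J, t j)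
    (h2 : ∑ j : Fin J, ((j : ℕ) + 1) * s j = ∑ j : Fin J, ((j : ℕ) + 1) * t j) :
    s = t := by
  have h1' : (∑ j : Fin J, (s j : ℤ)) = ∑ j : Fin J, (t j : ℤ) := by exact_mod_cast h1
  have h2' : (∑ j : Fin J, ((j : ℕ) + 1 : ℤ) * s j)
      = ∑ j : Fin J, ((j : ℕ) + 1 : ℤ) * t j := by exact_mod_cast h2
  by_cases hz : ∃ j, s j ≠ 0
  · have hzt : ∃ j, t j ≠ 0 := by
      by_contra hc
      push_neg at hc
      obtain ⟨j0, hj0⟩ := hz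
      have ht0 : (∑ j : Fin J, t j) = 0 := Finset.sum_eq_zero fun j _ => hc j
      rw [ht0] at h1
      exact hj0 (Finset.sum_eq_zero_iff.mp h1 j0 (Finset.mem_univ j0))
    obtain ⟨k, R, hR0, hsk1, hNs, hMs, hfs⟩ := terminal_entries hs hz
    obtain ⟨l, Q, hQ0, htl1, hNt, hMt, hft⟩ := terminal_entries ht hzt
    set N : ℤ := ∑ j : Fin J, (s j : ℤ) with hN
    have hN1 : 1 ≤ N := by
      have : (1 : ℤ) ≤ (s k : ℤ) := by exact_mod_cast hsk1
      linarith [hNs, hR0]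
    have hRN : R ≤ N - 1 := by
      have : (1 : ℤ) ≤ (s k : ℤ) := by exact_mod_cast hsk1
      linarith [hNs]
    have hQN : Q ≤ N - 1 := by
      have : (1 : ℤ) ≤ (t l : ℤ) := by exact_mod_cast htl1
      rw [← h1'] at hNt
      linarith [hNt]
    have hMeq : ((k : ℕ) + 1 : ℤ) * N + R = ((l : ℕ) + 1 : ℤ) * N + Q := by
      rw [hMs] at h2'
      rw [hMt, ← h1'] at h2'
      exact h2'
    have hkl : ((k : ℕ) : ℤ) = ((l : ℕ) : ℤ) := by
      rcases lt_trichotomy ((k : ℕ) : ℤ) ((l : ℕ) : ℤ) with h | h | h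
      · exfalso
        have hd1 : (1 : ℤ) ≤ ((l : ℕ) : ℤ) - (k : ℕ) := by omega
        nlinarith
      · exact h
      · exfalso
        have hd1 : (1 : ℤ) ≤ ((k : ℕ) : ℤ) - (l : ℕ) := by omega
        nlinarith
    have hklf : k = l := Fin.ext (by exact_mod_cast hkl)
    have hRQ : R = Q := by
      rw [hkl] at hMeq
      linarith
    funext j
    have es := hfs j
    have et := hft j
    rw [← h1'] at et
    rw [← hklf, ← hRQ] at et
    have : (s j : ℤ) = (t j : ℤ) := by rw [es, et]
    exact_mod_cast this
  · push_neg at hz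
    have hs0 : (∑ j : Fin J, s j) = 0 := Finset.sum_eq_zero fun j _ => hz j
    funext j
    rw [hz j]
    have ht0 : (∑ j : Fin J, t j) = 0 := by rw [← h1, hs0]
    exact (Finset.sum_eq_zero_iff.mp ht0 j (Finset.mem_univ j)).symm
lemma chain_fin {x y : Fin J → ℕ}
    (h : Relation.ReflTransGen Step x y) :
    ∃ (n : ℕ) (f : Fin (n + 1) → Fin J → ℕ),
      f 0 = x ∧ f (Fin.last n) = y ∧
      ∀ i : Fin n, (fun j => (f i.succ j : ℤ) - (f i.castSucc j : ℤ)) ∈ mvB J := by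
  induction h with
  | refl => exact ⟨0, fun _ => x, rfl, rfl, fun i => i.elim0⟩
  | @tail b c _ hstep ih =>
      obtain ⟨n, f, h0, hl, hstp⟩ := ih
      refine ⟨n + 1, Fin.snoc f c, ?_, ?_, ?_⟩
      · rw [show (0 : Fin (n + 2)) = Fin.castSucc 0 from rfl, Fin.snoc_castSucc]
        exact h0
      · rw [Fin.snoc_last]
      · intro i
        induction i using Fin.lastCases with
        | last =>
            rw [show (Fin.last n).succ = Fin.last (n + 1) from rfl, Fin.snoc_last,
              Fin.snoc_castSucc, hl]
            exact hstep
        | cast i =>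
            rw [Fin.succ_castSucc, Fin.snoc_castSucc, Fin.snoc_castSucc]
            exact hstp i
end MBaux

/-- The set B = { ±(e_{j1} + e_{j4} − e_{j2} − e_{j3}) :
1 ≤ j1 < j2 ≤ j3 < j4 ≤ J, j2 − j1 = j4 − j3 } is a Markov basis for the
univariate Poisson regression configuration: it connects every fiber.
Indices j ∈ {1,…,J} are represented by `j : Fin J` with value `(j : ℕ) + 1`. -/
theorem markov_basis_univariate_poisson (J : ℕ) (hJ : 1 ≤ J)
    (B : Set (Fin J → ℤ))
    (hB : B = {z : Fin J → ℤ | ∃ j1 j2 j3 j4 : Fin J,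
        j1 < j2 ∧ j2 ≤ j3 ∧ j3 < j4 ∧
        (j2 : ℕ) - (j1 : ℕ) = (j4 : ℕ) - (j3 : ℕ) ∧
        (z = Pi.single j1 (1 : ℤ) + Pi.single j4 (1 : ℤ)
              - Pi.single j2 (1 : ℤ) - Pi.single j3 (1 : ℤ) ∨
         z = -(Pi.single j1 (1 : ℤ) + Pi.single j4 (1 : ℤ)
              - Pi.single j2 (1 : ℤ) - Pi.single j3 (1 : ℤ)))})
    (x y : Fin J → ℕ)
    (hsum : ∑ j : Fin J, x j = ∑ j : Fin J, y j)
    (hwsum : ∑ j : Fin J, ((j : ℕ) + 1) * x j = ∑ j : Fin J, ((j : ℕ) + 1) * y j) :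
    ∃ (n : ℕ) (f : Fin (n + 1) → Fin J → ℕ),
      f 0 = x ∧ f (Fin.last n) = y ∧
      ∀ i : Fin n, (fun j => (f i.succ j : ℤ) - (f i.castSucc j : ℤ)) ∈ B := by
  have hB' : B = MBaux.mvB J := hB
  subst hB'
  obtain ⟨ts, hcs, hts⟩ := MBaux.reach_terminal x
  obtain ⟨tt, hct, htt⟩ := MBaux.reach_terminal y
  have hstats_s := MBaux.chain_stats hcs
  have hstats_t := MBaux.chain_stats hct
  have heq : ts = tt := MBaux.terminal_eq hts htt
    (hstats_s.1.symm.trans (hsum.trans hstats_t.1))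
    (hstats_s.2.symm.trans (hwsum.trans hstats_t.2))
  have hchain : Relation.ReflTransGen MBaux.Step x y :=
    hcs.trans (heq ▸ MBaux.chain_symm hct)
  exact MBaux.chain_fin hchain
end

section
/- Let J ≥ 1 and let B = { ±(e_{j1} + e_{j4} − e_{j2} − e_{j3}) : 1 ≤ j1 < j2 ≤ j3 < j4 ≤ J, j2 − j1 = j4 − j3 }. Then B is the minimum-fiber Markov basis for the univariate Poisson regression configuration: B is a Markov basis, and B equals the union of all inclusion-minimal Markov bases (taken over symmetric sets of moves). -/
/-- A move for the univariate Poisson regression configuration: a nonzero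
integer vector with zero sum and zero weighted sum (levels j ∈ {1,…,J} are
represented by `j : Fin J` with value `(j : ℕ) + 1`). -/
def PoisIsMove (J : ℕ) (z : Fin J → ℤ) : Prop :=
  z ≠ 0 ∧ (∑ j : Fin J, z j) = 0 ∧ (∑ j : Fin J, (((j : ℕ) : ℤ) + 1) * z j) = 0

/-- Two tables are in the same fiber: equal sufficient statistics. -/
def PoisSameFiber (J : ℕ) (x y : Fin J → ℕ) : Prop :=
  (∑ j : Fin J, x j = ∑ j : Fin J, y j) ∧
  (∑ j : Fin J, ((j : ℕ) + 1) * x j = ∑ j : Fin J, ((j : ℕ) + 1) * y j)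

/-- `M` connects `x` to `y` through nonnegative tables. -/
def PoisConnects (J : ℕ) (M : Set (Fin J → ℤ)) (x y : Fin J → ℕ) : Prop :=
  ∃ (n : ℕ) (f : Fin (n + 1) → Fin J → ℕ),
    f 0 = x ∧ f (Fin.last n) = y ∧
    ∀ i : Fin n, (fun j => (f i.succ j : ℤ) - (f i.castSucc j : ℤ)) ∈ M

/-- A Markov basis: a symmetric set of moves connecting every fiber. -/
def PoisIsMarkovBasis (J : ℕ) (M : Set (Fin J → ℤ)) : Prop :=
  (∀ z ∈ M, PoisIsMove J z) ∧ (∀ z ∈ M, -z ∈ M) ∧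
  ∀ x y : Fin J → ℕ, PoisSameFiber J x y → PoisConnects J M x y

/-- A minimal Markov basis: no proper symmetric subset is a Markov basis. -/
def PoisIsMinimalMarkovBasis (J : ℕ) (M : Set (Fin J → ℤ)) : Prop :=
  PoisIsMarkovBasis J M ∧
  ∀ M' : Set (Fin J → ℤ), M' ⊂ M → (∀ z ∈ M', -z ∈ M') →
    ¬ PoisIsMarkovBasis J M'


namespace PoisAux
variable {J : ℕ}

def E (a : Fin J) : Fin J → ℕ := fun j => if j = a then 1 else 0

def stepRel (M : Set (Fin J → ℤ)) (x y : Fin J → ℕ) : Prop :=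
  (fun j => (y j : ℤ) - (x j : ℤ)) ∈ M

theorem connects_of_rtg {M : Set (Fin J → ℤ)} {x y : Fin J → ℕ}
    (h : Relation.ReflTransGen (stepRel M) x y) : PoisConnects J M x y := by
  induction h with
  | refl => exact ⟨0, fun _ => x, rfl, rfl, fun i => i.elim0⟩
  | tail _ hstep ih =>
      rename_i b c _
      obtain ⟨n, f, hf0, hfl, hfm⟩ := ih
      refine ⟨n + 1, Fin.snoc f c, ?_, ?_, ?_⟩
      · simpa [Fin.snoc] using hf0
      · simp
      · intro i
        rcases Fin.lt_or_eq_of_le (Fin.le_last i) with hi | hi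
        · have hi' : (i : ℕ) < n := by
            have := hi
            simpa [Fin.lt_iff_val_lt_val, Fin.last] using this
          have h1 : (Fin.snoc f c : Fin (n+2) → Fin J → ℕ) i.succ
              = f ⟨(i : ℕ)+1, by omega⟩ := by
            have : (i.succ : Fin (n+2)) = Fin.castSucc ⟨(i:ℕ)+1, by omega⟩ := by
              ext; simp
            rw [this, Fin.snoc_castSucc]
          have h2 : (Fin.snoc f c : Fin (n+2) → Fin J → ℕ) i.castSucc
              = f ⟨(i : ℕ), by omega⟩ := by
            have : (i.castSucc : Fin (n+2)) = Fin.castSucc ⟨(i:ℕ), by omega⟩ := by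
              ext; simp
            rw [this, Fin.snoc_castSucc]
          rw [h1, h2]
          exact hfm ⟨(i : ℕ), hi'⟩
        · have h1 : (Fin.snoc f c : Fin (n+2) → Fin J → ℕ) i.succ = c := by
            have : (i.succ : Fin (n+2)) = Fin.last (n+1) := by
              ext; simp [hi, Fin.last]
            rw [this, Fin.snoc_last]
          have h2 : (Fin.snoc f c : Fin (n+2) → Fin J → ℕ) i.castSucc = b := by
            have : (i.castSucc : Fin (n+2)) = Fin.castSucc (Fin.last n) := by
              ext; simp [hi]
            rw [this, Fin.snoc_castSucc, ← hfl]
          rw [h1, h2]; exact hstep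

theorem rtg_of_connects {M : Set (Fin J → ℤ)} {x y : Fin J → ℕ}
    (h : PoisConnects J M x y) : Relation.ReflTransGen (stepRel M) x y := by
  obtain ⟨n, f, hf0, hfl, hfm⟩ := h
  subst hf0 hfl
  induction n with
  | zero => exact Relation.ReflTransGen.refl
  | succ m ih =>
      have step : stepRel M (f 0) ((f ∘ Fin.succ) 0) := by
        have := hfm 0
        simpa [Fin.succ_zero_eq_one, stepRel] using this
      have tail : Relation.ReflTransGen (stepRel M) ((f ∘ Fin.succ) 0)
          ((f ∘ Fin.succ) (Fin.last m)) := by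
        apply ih (f ∘ Fin.succ)
        intro i
        have := hfm i.succ
        exact this
      have hlast : (f ∘ Fin.succ) (Fin.last m) = f (Fin.last (m+1)) := by
        simp [Fin.succ_last]
      rw [hlast] at tail
      exact Relation.ReflTransGen.head step tail

theorem connects_iff {M : Set (Fin J → ℤ)} {x y : Fin J → ℕ} :
    PoisConnects J M x y ↔ Relation.ReflTransGen (stepRel M) x y :=
  ⟨rtg_of_connects, connects_of_rtg⟩

end PoisAux

namespace PoisAux
variable {J : ℕ}

theorem connects_refl (M : Set (Fin J → ℤ)) (x : Fin J → ℕ) :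
    PoisConnects J M x x := connects_of_rtg Relation.ReflTransGen.refl

theorem connects_trans {M : Set (Fin J → ℤ)} {x y z : Fin J → ℕ}
    (h1 : PoisConnects J M x y) (h2 : PoisConnects J M y z) :
    PoisConnects J M x z :=
  connects_of_rtg ((rtg_of_connects h1).trans (rtg_of_connects h2))

theorem connects_symm {M : Set (Fin J → ℤ)} (hsym : ∀ z ∈ M, -z ∈ M)
    {x y : Fin J → ℕ} (h : PoisConnects J M x y) : PoisConnects J M y x := by
  apply connects_of_rtg
  have hs : Symmetric (stepRel (J := J) M) := by
    intro a b hab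
    have := hsym _ hab
    have he : (fun j => (a j : ℤ) - (b j : ℤ))
        = -(fun j => (b j : ℤ) - (a j : ℤ)) := by funext j; simp
    rw [stepRel, he]
    exact this
  haveI : Std.Symm (stepRel (J := J) M) := ⟨fun a b hab => hs hab⟩
  exact Std.Symm.symm _ _ (rtg_of_connects h)

theorem connects_single {M : Set (Fin J → ℤ)} {x y : Fin J → ℕ}
    (h : (fun j => (y j : ℤ) - (x j : ℤ)) ∈ M) : PoisConnects J M x y :=
  connects_of_rtg (Relation.ReflTransGen.single h)

theorem connects_add {M : Set (Fin J → ℤ)} {x y : Fin J → ℕ} (t : Fin J → ℕ)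
    (h : PoisConnects J M x y) : PoisConnects J M (x + t) (y + t) := by
  apply connects_of_rtg
  refine Relation.ReflTransGen.lift (fun u => u + t) ?_ _ _ (rtg_of_connects h)
  intro a b hab
  have he : (fun j => ((b + t) j : ℤ) - ((a + t) j : ℤ))
      = (fun j => (b j : ℤ) - (a j : ℤ)) := by
    funext j; push_cast [Pi.add_apply]; ring
  show stepRel M (a + t) (b + t)
  rw [stepRel, he]
  exact hab

def deg (x : Fin J → ℕ) : ℕ := ∑ j : Fin J, x j
def ws (x : Fin J → ℕ) : ℕ := ∑ j : Fin J, ((j : ℕ) + 1) * x j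

theorem sameFiber_iff {x y : Fin J → ℕ} :
    PoisSameFiber J x y ↔ (deg x = deg y ∧ ws x = ws y) := Iff.rfl

/-- a move step preserves the fiber -/
theorem step_fiber {M : Set (Fin J → ℤ)} (hmv : ∀ z ∈ M, PoisIsMove J z)
    {x y : Fin J → ℕ} (h : stepRel M x y) : deg x = deg y ∧ ws x = ws y := by
  obtain ⟨-, hsum, hwsum⟩ := hmv _ h
  constructor
  · have : ((deg x : ℤ)) = (deg y : ℤ) := by
      simp only [deg]
      push_cast
      rw [Finset.sum_sub_distrib] at hsum
      omega
    exact_mod_cast this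
  · have : ((ws x : ℤ)) = (ws y : ℤ) := by
      simp only [ws]
      push_cast
      have h3 : ∑ j : Fin J, ((((j : ℕ) : ℤ) + 1) * (y j : ℤ) - (((j : ℕ) : ℤ) + 1) * (x j : ℤ)) = 0 := by
        rw [← hwsum]; congr 1; funext j; ring
      rw [Finset.sum_sub_distrib] at h3
      omega
    exact_mod_cast this

theorem rtg_fiber {M : Set (Fin J → ℤ)} (hmv : ∀ z ∈ M, PoisIsMove J z)
    {x y : Fin J → ℕ} (h : Relation.ReflTransGen (stepRel M) x y) :
    deg x = deg y ∧ ws x = ws y := by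
  induction h with
  | refl => exact ⟨rfl, rfl⟩
  | tail _ hstep ih =>
      obtain ⟨h1, h2⟩ := step_fiber hmv hstep
      exact ⟨ih.1.trans h1, ih.2.trans h2⟩

theorem deg_E (a : Fin J) : deg (E a) = 1 := by
  simp [deg, E]

theorem deg_add (x y : Fin J → ℕ) : deg (x + y) = deg x + deg y := by
  simp [deg, Finset.sum_add_distrib]

theorem ws_add (x y : Fin J → ℕ) : ws (x + y) = ws x + ws y := by
  simp [ws, Pi.add_apply, Nat.mul_add, Finset.sum_add_distrib]

theorem ws_E (a : Fin J) : ws (E a) = (a : ℕ) + 1 := by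
  simp [ws, E]

theorem exists_pos_of_deg_pos {x : Fin J → ℕ} (h : 0 < deg x) :
    ∃ a, 0 < x a := by
  by_contra hc
  push_neg at hc
  have : deg x = 0 := by
    simp only [deg]
    exact Finset.sum_eq_zero (fun j _ => Nat.le_zero.mp (hc j))
  omega

theorem le_deg {x : Fin J → ℕ} (a : Fin J) : x a ≤ deg x :=
  Finset.single_le_sum (fun i _ => Nat.zero_le _) (Finset.mem_univ a)

theorem two_le_deg {x : Fin J → ℕ} {a b : Fin J} (hab : a ≠ b)
    (ha : 0 < x a) (hb : 0 < x b) : x a + x b ≤ deg x := by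
  have h1 := Finset.add_sum_erase Finset.univ x (Finset.mem_univ a)
  have hb' : b ∈ Finset.univ.erase a := Finset.mem_erase.mpr ⟨fun h' => hab h'.symm, Finset.mem_univ b⟩
  have h2 : x b ≤ ∑ i ∈ Finset.univ.erase a, x i :=
    Finset.single_le_sum (fun i _ => Nat.zero_le _) hb'
  simp only [deg]
  omega

theorem deg_one {x : Fin J → ℕ} (h : deg x = 1) : ∃ a, x = E a := by
  obtain ⟨a, ha⟩ := exists_pos_of_deg_pos (x := x) (by omega)
  refine ⟨a, funext fun j => ?_⟩
  have hle : x a ≤ deg x := le_deg a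
  by_cases hj : j = a
  · subst hj; simp only [E, if_pos rfl, eq_self_iff_true, if_true]; omega
  · simp only [E, if_neg hj]
    by_contra hne
    have hjpos : 0 < x j := Nat.pos_of_ne_zero hne
    have := two_le_deg hj hjpos ha
    omega

theorem sub_E {x : Fin J → ℕ} {a : Fin J} (h : 0 < x a) :
    ∃ t : Fin J → ℕ, x = t + E a ∧ deg t = deg x - 1 ∧ ws t = ws x - ((a:ℕ)+1) := by
  refine ⟨fun j => x j - E a j, ?_, ?_, ?_⟩
  · funext j
    by_cases hj : j = a <;> simp [E, hj] <;> omega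
  · have hd : deg x = deg (fun j => x j - E a j) + deg (E a) := by
      simp only [deg]
      rw [← Finset.sum_add_distrib]
      apply Finset.sum_congr rfl
      intro j _
      by_cases hj : j = a
      · subst hj; simp only [E, if_pos rfl, eq_self_iff_true, if_true]; omega
      · simp only [E, if_neg hj]; omega
    rw [deg_E] at hd; omega
  · have hd : ws x = ws (fun j => x j - E a j) + ws (E a) := by
      simp only [ws]
      rw [← Finset.sum_add_distrib]
      apply Finset.sum_congr rfl
      intro j _
      by_cases hj : j = a
      · subst hj
        simp only [E, eq_self_iff_true, if_true, Nat.mul_one]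
        rw [← Nat.mul_succ]
        congr 1
        omega
      · simp [E, hj]
    rw [ws_E] at hd; omega

theorem deg_two {x : Fin J → ℕ} (h : deg x = 2) : ∃ a b, x = E a + E b := by
  obtain ⟨a, ha⟩ := exists_pos_of_deg_pos (x := x) (by omega)
  obtain ⟨t, hxt, hdt, -⟩ := sub_E ha
  rw [h] at hdt
  obtain ⟨b, hb⟩ := deg_one (by omega : deg t = 1)
  exact ⟨b, a, by rw [hxt, hb]⟩

end PoisAux

namespace PoisAux
variable {J : ℕ}

theorem le_ws {x : Fin J → ℕ} (a : Fin J) : ((a:ℕ)+1) * x a ≤ ws x := by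
  have := Finset.single_le_sum (f := fun j : Fin J => ((j:ℕ)+1) * x j)
    (fun i _ => Nat.zero_le _) (Finset.mem_univ a)
  simpa [ws] using this

theorem ws_le_of_max {y : Fin J → ℕ} {b : Fin J}
    (h : ∀ j, 0 < y j → (j:ℕ) ≤ (b:ℕ)) : ws y ≤ ((b:ℕ)+1) * deg y := by
  simp only [ws, deg, Finset.mul_sum]
  apply Finset.sum_le_sum
  intro j _
  rcases Nat.eq_zero_or_pos (y j) with h0 | h0
  · simp [h0]
  · exact Nat.mul_le_mul_right _ (by have := h j h0; omega)

theorem ws_ge_of_min {x : Fin J → ℕ} {c : Fin J}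
    (h : ∀ j, 0 < x j → (c:ℕ) ≤ (j:ℕ)) : ((c:ℕ)+1) * deg x ≤ ws x := by
  simp only [ws, deg, Finset.mul_sum]
  apply Finset.sum_le_sum
  intro j _
  rcases Nat.eq_zero_or_pos (x j) with h0 | h0
  · simp [h0]
  · exact Nat.mul_le_mul_right _ (by have := h j h0; omega)

/-- The key connectivity lemma: if a symmetric set S connects every pair of
degree-2 tables in the same fiber, then S connects every fiber. -/
theorem conn {S : Set (Fin J → ℤ)} (hsym : ∀ z ∈ S, -z ∈ S)
    (H2 : ∀ a b c d : Fin J, (a:ℕ) + (b:ℕ) = (c:ℕ) + (d:ℕ) →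
      PoisConnects J S (E a + E b) (E c + E d)) :
    ∀ x y : Fin J → ℕ, deg x = deg y → ws x = ws y → PoisConnects J S x y := by
  suffices H : ∀ (n : ℕ) (x y : Fin J → ℕ), deg x = n → deg y = n → ws x = ws y →
      PoisConnects J S x y by
    intro x y hd hw
    exact H (deg x) x y rfl hd.symm hw
  intro n
  induction n with
  | zero =>
      intro x y hdx hdy _
      have hxy : x = y := by
        funext j
        have h1 := le_deg (x := x) j
        have h2 := le_deg (x := y) j
        omega
      rw [hxy]
      exact connects_refl S y
  | succ n IH =>
      -- the shared-coordinate case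
      have share : ∀ x y : Fin J → ℕ, deg x = n+1 → deg y = n+1 → ws x = ws y →
          (∃ v, 0 < x v ∧ 0 < y v) → PoisConnects J S x y := by
        rintro x y hdx hdy hw ⟨v, hxv, hyv⟩
        obtain ⟨t, hxt, hdt, hwt⟩ := sub_E hxv
        obtain ⟨s, hys, hds, hws⟩ := sub_E hyv
        have hwx : ((v:ℕ)+1) ≤ ws x := le_trans (by nlinarith [hxv]) (le_ws v)
        have hwy : ((v:ℕ)+1) ≤ ws y := le_trans (by nlinarith [hyv]) (le_ws v)
        have hts : PoisConnects J S t s := IH t s (by omega) (by omega) (by omega)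
        rw [hxt, hys]
        exact connects_add _ hts
      -- the main construction when the maxima of supports satisfy b < a
      have key : ∀ (x y : Fin J → ℕ) (a b : Fin J), deg x = n+1 → deg y = n+1 →
          ws x = ws y → (∀ v, ¬(0 < x v ∧ 0 < y v)) → 0 < x a → 0 < y b →
          (∀ j, 0 < x j → (j:ℕ) ≤ (a:ℕ)) → (∀ j, 0 < y j → (j:ℕ) ≤ (b:ℕ)) →
          (b:ℕ) < (a:ℕ) → PoisConnects J S x y := by
        intro x y a b hdx hdy hw hdis hxa hyb hmaxx hmaxy hba
        -- minimum of the support of x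
        have hsne : (Finset.univ.filter (fun j => 0 < x j)).Nonempty :=
          ⟨a, by simp [hxa]⟩
        set c := (Finset.univ.filter (fun j => 0 < x j)).min' hsne with hc
        have hxc : 0 < x c := by
          have := (Finset.univ.filter (fun j => 0 < x j)).min'_mem hsne
          simpa using this
        have hminx : ∀ j, 0 < x j → (c:ℕ) ≤ (j:ℕ) := by
          intro j hj
          exact Finset.min'_le _ j (by simp [hj])
        -- c < b
        have hcb : (c:ℕ) < (b:ℕ) := by
          by_contra hcon
          push_neg at hcon
          have hxb : ¬ 0 < x b := fun h => hdis b ⟨h, hyb⟩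
          have hbc : (b:ℕ) ≠ (c:ℕ) := by
            intro h
            exact hxb (by rwa [show b = c from Fin.ext h])
          have hbc' : (b:ℕ) + 1 ≤ (c:ℕ) := by omega
          have h1 : ws y ≤ ((b:ℕ)+1) * (n+1) := by
            have := ws_le_of_max hmaxy
            rwa [hdy] at this
          have h2 : ((c:ℕ)+1) * (n+1) ≤ ws x := by
            have := ws_ge_of_min hminx
            rwa [hdx] at this
          have h3 : ((b:ℕ)+1) * (n+1) < ((c:ℕ)+1) * (n+1) :=
            Nat.mul_lt_mul_of_lt_of_le (by omega) (le_refl _) (Nat.succ_pos n)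
          omega
        have hca : (c:ℕ) < (a:ℕ) := lt_trans hcb hba
        have hac : a ≠ c := by
          intro h
          rw [h] at hca
          omega
        -- remove E a and E c from x
        obtain ⟨t1, hx1, hd1, -⟩ := sub_E hxa
        have ht1c : 0 < t1 c := by
          have : x c = t1 c + E a c := by rw [hx1]; rfl
          have hEac : E a c = 0 := by
            have hne : ¬ (c = a) := fun h => hac h.symm
            simp [E, hne]
          omega
        obtain ⟨t2, hx2, hd2, -⟩ := sub_E ht1c
        have hxsplit : x = t2 + (E c + E a) := by
          rw [hx1, hx2]; funext j; simp [Pi.add_apply]; ring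
        -- the new index d
        have hdlt : (a:ℕ) + (c:ℕ) - (b:ℕ) < J := by
          have := a.isLt
          omega
        set d : Fin J := ⟨(a:ℕ) + (c:ℕ) - (b:ℕ), hdlt⟩ with hd
        have hsum : (c:ℕ) + (a:ℕ) = (b:ℕ) + (d:ℕ) := by
          simp only [hd]
          omega
        -- one block move
        have hmove : PoisConnects J S (E c + E a + t2) (E b + E d + t2) :=
          connects_add t2 (H2 c a b d hsum)
        have hx1' : x = E c + E a + t2 := by rw [hxsplit]; ring
        set x' : Fin J → ℕ := E b + E d + t2 with hx'
        have hdeg' : deg x' = n + 1 := by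
          have h1 : deg x = deg t2 + 2 := by
            rw [hxsplit, deg_add, deg_add, deg_E, deg_E]
          have h2 : deg x' = deg t2 + 2 := by
            rw [hx', deg_add, deg_add, deg_E, deg_E]; ring
          omega
        have hws' : ws x' = ws x := by
          have h1 : ws x = ws t2 + ((c:ℕ)+1) + ((a:ℕ)+1) := by
            rw [hxsplit, ws_add, ws_add, ws_E, ws_E]; ring
          have h2 : ws x' = ws t2 + ((b:ℕ)+1) + ((d:ℕ)+1) := by
            rw [hx', ws_add, ws_add, ws_E, ws_E]; ring
          omega
        have hx'b : 0 < x' b := by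
          have : x' b = E b b + E d b + t2 b := rfl
          have hEbb : E b b = 1 := by simp [E]
          omega
        have hshare : PoisConnects J S x' y :=
          share x' y hdeg' hdy (by rw [hws', hw]) ⟨b, hx'b, hyb⟩
        rw [hx1']
        exact connects_trans hmove hshare
      -- main argument
      intro x y hdx hdy hw
      by_cases hsh : ∃ v, 0 < x v ∧ 0 < y v
      · exact share x y hdx hdy hw hsh
      · push_neg at hsh
        have hdis : ∀ v, ¬(0 < x v ∧ 0 < y v) := by
          intro v hv
          have := hsh v hv.1
          omega
        -- maxima of the supports
        have hxne : (Finset.univ.filter (fun j => 0 < x j)).Nonempty := by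
          obtain ⟨a, ha⟩ := exists_pos_of_deg_pos (x := x) (by omega)
          exact ⟨a, by simp [ha]⟩
        have hyne : (Finset.univ.filter (fun j => 0 < y j)).Nonempty := by
          obtain ⟨a, ha⟩ := exists_pos_of_deg_pos (x := y) (by omega)
          exact ⟨a, by simp [ha]⟩
        set a := (Finset.univ.filter (fun j => 0 < x j)).max' hxne with ha
        set b := (Finset.univ.filter (fun j => 0 < y j)).max' hyne with hb
        have hxa : 0 < x a := by
          have := (Finset.univ.filter (fun j => 0 < x j)).max'_mem hxne
          simpa using this
        have hyb : 0 < y b := by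
          have := (Finset.univ.filter (fun j => 0 < y j)).max'_mem hyne
          simpa using this
        have hmaxx : ∀ j, 0 < x j → (j:ℕ) ≤ (a:ℕ) := fun j hj =>
          Finset.le_max' _ j (by simp [hj])
        have hmaxy : ∀ j, 0 < y j → (j:ℕ) ≤ (b:ℕ) := fun j hj =>
          Finset.le_max' _ j (by simp [hj])
        have hab : (a:ℕ) ≠ (b:ℕ) := by
          intro h
          have hab' : a = b := Fin.ext h
          rw [hab'] at hxa
          exact hdis b ⟨hxa, hyb⟩
        rcases Nat.lt_or_ge (b:ℕ) (a:ℕ) with hba | hba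
        · exact key x y a b hdx hdy hw hdis hxa hyb hmaxx hmaxy hba
        · have hba' : (a:ℕ) < (b:ℕ) := by omega
          have hdis' : ∀ v, ¬(0 < y v ∧ 0 < x v) := fun v ⟨h1, h2⟩ => hdis v ⟨h2, h1⟩
          exact connects_symm hsym (key y x b a hdy hdx hw.symm hdis' hyb hxa hmaxy hmaxx hba')

end PoisAux


namespace PoisAux
variable {J : ℕ}

theorem E_apply (a j : Fin J) : E a j = if j = a then 1 else 0 := rfl

def Bset (J : ℕ) : Set (Fin J → ℤ) :=
  {z : Fin J → ℤ | ∃ j1 j2 j3 j4 : Fin J,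
      j1 < j2 ∧ j2 ≤ j3 ∧ j3 < j4 ∧
      (j2 : ℕ) - (j1 : ℕ) = (j4 : ℕ) - (j3 : ℕ) ∧
      (z = Pi.single j1 (1 : ℤ) + Pi.single j4 (1 : ℤ)
            - Pi.single j2 (1 : ℤ) - Pi.single j3 (1 : ℤ) ∨
       z = -(Pi.single j1 (1 : ℤ) + Pi.single j4 (1 : ℤ)
            - Pi.single j2 (1 : ℤ) - Pi.single j3 (1 : ℤ)))}

theorem Bsym {z : Fin J → ℤ} (h : z ∈ Bset J) : -z ∈ Bset J := by
  obtain ⟨j1, j2, j3, j4, h1, h2, h3, h4, h5 | h5⟩ := h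
  · exact ⟨j1, j2, j3, j4, h1, h2, h3, h4, Or.inr (by rw [h5])⟩
  · exact ⟨j1, j2, j3, j4, h1, h2, h3, h4, Or.inl (by rw [h5, neg_neg])⟩

theorem move_neg {z : Fin J → ℤ} (h : PoisIsMove J z) : PoisIsMove J (-z) := by
  obtain ⟨h1, h2, h3⟩ := h
  refine ⟨neg_ne_zero.mpr h1, ?_, ?_⟩
  · simp only [Pi.neg_apply, Finset.sum_neg_distrib, h2, neg_zero]
  · simp only [Pi.neg_apply, mul_neg, Finset.sum_neg_distrib, h3, neg_zero]

theorem sum_single (a : Fin J) :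
    ∑ j : Fin J, (Pi.single a (1:ℤ) : Fin J → ℤ) j = 1 := by
  simp [Pi.single_apply]

theorem sum_wsingle (a : Fin J) :
    ∑ j : Fin J, (((j:ℕ):ℤ)+1) * (Pi.single a (1:ℤ) : Fin J → ℤ) j = ((a:ℕ):ℤ)+1 := by
  rw [Finset.sum_eq_single a]
  · simp
  · intro b _ hb
    simp [Pi.single_eq_of_ne hb]
  · simp

theorem Bmove {z : Fin J → ℤ} (h : z ∈ Bset J) : PoisIsMove J z := by
  obtain ⟨j1, j2, j3, j4, h1, h2, h3, h4, h5⟩ := h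
  have h1' : (j1:ℕ) < (j2:ℕ) := h1
  have h2' : (j2:ℕ) ≤ (j3:ℕ) := h2
  have h3' : (j3:ℕ) < (j4:ℕ) := h3
  have hpos : PoisIsMove J (Pi.single j1 (1 : ℤ) + Pi.single j4 (1 : ℤ)
      - Pi.single j2 (1 : ℤ) - Pi.single j3 (1 : ℤ)) := by
    refine ⟨?_, ?_, ?_⟩
    · intro hz
      have h12 : j1 ≠ j2 := by intro h; rw [h] at h1'; omega
      have h13 : j1 ≠ j3 := by intro h; rw [h] at h1'; omega
      have h14 : j1 ≠ j4 := by intro h; rw [h] at h1'; omega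
      have hval := congrFun hz j1
      have e2 : (Pi.single j2 (1:ℤ) : Fin J → ℤ) j1 = 0 := Pi.single_eq_of_ne h12 1
      have e3 : (Pi.single j3 (1:ℤ) : Fin J → ℤ) j1 = 0 := Pi.single_eq_of_ne h13 1
      have e4 : (Pi.single j4 (1:ℤ) : Fin J → ℤ) j1 = 0 := Pi.single_eq_of_ne h14 1
      simp only [Pi.add_apply, Pi.sub_apply, Pi.single_eq_same, e2, e3, e4,
        Pi.zero_apply] at hval
      omega
    · simp only [Pi.add_apply, Pi.sub_apply, Finset.sum_sub_distrib, Finset.sum_add_distrib,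
        sum_single]
      ring
    · simp only [Pi.add_apply, Pi.sub_apply, mul_sub, mul_add, Finset.sum_sub_distrib,
        Finset.sum_add_distrib, sum_wsingle]
      have : (j1:ℕ) + (j4:ℕ) = (j2:ℕ) + (j3:ℕ) := by omega
      omega
  rcases h5 with h5 | h5
  · rw [h5]; exact hpos
  · rw [h5]; exact move_neg hpos

theorem Bmem4 {a b c d : Fin J} (hab : (a:ℕ) ≤ (b:ℕ)) (hcd : (c:ℕ) ≤ (d:ℕ))
    (hsum : (a:ℕ)+(b:ℕ) = (c:ℕ)+(d:ℕ)) (hne : (a:ℕ) ≠ (c:ℕ)) :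
    (Pi.single c (1:ℤ) + Pi.single d 1 - Pi.single a 1 - Pi.single b 1) ∈ Bset J := by
  rcases Nat.lt_or_ge (a:ℕ) (c:ℕ) with h | h
  · refine ⟨a, c, d, b, ?_, ?_, ?_, ?_, Or.inr (by ring)⟩
    · exact Fin.lt_def.mpr h
    · exact Fin.le_def.mpr hcd
    · exact Fin.lt_def.mpr (by omega)
    · omega
  · have h' : (c:ℕ) < (a:ℕ) := by omega
    refine ⟨c, a, b, d, ?_, ?_, ?_, ?_, Or.inl (by ring)⟩
    · exact Fin.lt_def.mpr h'
    · exact Fin.le_def.mpr hab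
    · exact Fin.lt_def.mpr (by omega)
    · omega

theorem E_add_comm (a b : Fin J) : E a + E b = E b + E a := add_comm _ _

theorem Bpair {a b c d : Fin J} (hsum : (a:ℕ)+(b:ℕ) = (c:ℕ)+(d:ℕ))
    (hne : E a + E b ≠ E (J := J) c + E d) :
    (fun j => (((E c + E d) j : ℕ) : ℤ) - (((E a + E b) j : ℕ) : ℤ)) ∈ Bset J := by
  have hfun : (fun j => (((E c + E d) j : ℕ) : ℤ) - (((E a + E b) j : ℕ) : ℤ))
      = (Pi.single c (1:ℤ) + Pi.single d 1 - Pi.single a 1 - Pi.single b 1 : Fin J → ℤ) := by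
    funext j
    simp only [Pi.add_apply, Pi.sub_apply, Pi.single_apply, E_apply]
    push_cast
    ring
  rw [hfun]
  have hEeq : ∀ p q : Fin J, (p:ℕ) = (q:ℕ) → E (J := J) p = E q := by
    intro p q h
    rw [Fin.ext h]
  rcases le_total (a:ℕ) (b:ℕ) with hab | hab <;> rcases le_total (c:ℕ) (d:ℕ) with hcd | hcd
  · apply Bmem4 hab hcd hsum
    intro h
    apply hne
    rw [hEeq a c h, hEeq b d (by omega)]
  · have hne' : (a:ℕ) ≠ (d:ℕ) := by
      intro h
      apply hne
      rw [hEeq a d h, hEeq b c (by omega), E_add_comm]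
    have heq : (Pi.single c (1:ℤ) + Pi.single d 1 - Pi.single a 1 - Pi.single b 1 : Fin J → ℤ)
        = (Pi.single d (1:ℤ) + Pi.single c 1 - Pi.single a 1 - Pi.single b 1 : Fin J → ℤ) := by ring
    rw [heq]
    exact Bmem4 hab hcd (by omega) hne'
  · have hne' : (b:ℕ) ≠ (c:ℕ) := by
      intro h
      apply hne
      rw [hEeq b c h, hEeq a d (by omega), E_add_comm]
    have heq : (Pi.single c (1:ℤ) + Pi.single d 1 - Pi.single a 1 - Pi.single b 1 : Fin J → ℤ)
        = (Pi.single c (1:ℤ) + Pi.single d 1 - Pi.single b 1 - Pi.single a 1 : Fin J → ℤ) := by ring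
    rw [heq]
    exact Bmem4 hab hcd (by omega) hne'
  · have hne' : (b:ℕ) ≠ (d:ℕ) := by
      intro h
      apply hne
      rw [hEeq b d h, hEeq a c (by omega), E_add_comm]
    have heq : (Pi.single c (1:ℤ) + Pi.single d 1 - Pi.single a 1 - Pi.single b 1 : Fin J → ℤ)
        = (Pi.single d (1:ℤ) + Pi.single c 1 - Pi.single b 1 - Pi.single a 1 : Fin J → ℤ) := by ring
    rw [heq]
    exact Bmem4 hab hcd (by omega) hne'

theorem ws_pair (a b : Fin J) : ws (E a + E b) = (a:ℕ) + (b:ℕ) + 2 := by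
  rw [ws_add, ws_E, ws_E]; ring

theorem deg_pair (a b : Fin J) : deg (E a + E b) = 2 := by
  rw [deg_add, deg_E, deg_E]

theorem diff_mem_B {u w : Fin J → ℕ} (hdu : deg u = 2) (hdw : deg w = 2)
    (hws : ws u = ws w) (hne : u ≠ w) :
    (fun j => ((w j : ℕ) : ℤ) - ((u j : ℕ) : ℤ)) ∈ Bset J := by
  obtain ⟨a, b, rfl⟩ := deg_two hdu
  obtain ⟨c, d, rfl⟩ := deg_two hdw
  have hsum : (a:ℕ)+(b:ℕ) = (c:ℕ)+(d:ℕ) := by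
    rw [ws_pair, ws_pair] at hws
    omega
  exact Bpair hsum hne

theorem pos_E_add {a b p : Fin J} (h : 0 < (E a + E b) p) : p = a ∨ p = b := by
  by_contra hc
  push_neg at hc
  have : (E a + E b) p = 0 := by
    simp [E_apply, Pi.add_apply, hc.1, hc.2]
  omega

theorem deg2_shared {u v : Fin J → ℕ} (hdu : deg u = 2) (hdv : deg v = 2)
    (hw : ws u = ws v) {p : Fin J} (hup : 0 < u p) (hvp : 0 < v p) : u = v := by
  obtain ⟨a, b, rfl⟩ := deg_two hdu
  obtain ⟨c, d, rfl⟩ := deg_two hdv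
  rw [ws_pair, ws_pair] at hw
  have hEeq : ∀ p q : Fin J, (p:ℕ) = (q:ℕ) → E (J := J) p = E q := by
    intro p q h
    rw [Fin.ext h]
  rcases pos_E_add hup with h1 | h1 <;> rcases pos_E_add hvp with h2 | h2
  · have hac : (a:ℕ) = (c:ℕ) := by rw [← h1, ← h2]
    rw [hEeq a c hac, hEeq b d (by omega)]
  · have had : (a:ℕ) = (d:ℕ) := by rw [← h1, ← h2]
    rw [hEeq a d had, hEeq b c (by omega)]
    exact E_add_comm d c
  · have hbc : (b:ℕ) = (c:ℕ) := by rw [← h1, ← h2]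
    rw [hEeq a d (by omega), hEeq b c hbc]
    exact E_add_comm d c
  · have hbd : (b:ℕ) = (d:ℕ) := by rw [← h1, ← h2]
    rw [hEeq a c (by omega), hEeq b d hbd]

theorem pairs_eq {u u' w w' : Fin J → ℕ}
    (h1 : ∀ j, u j = 0 ∨ u' j = 0) (h2 : ∀ j, w j = 0 ∨ w' j = 0)
    (hd : ∀ j, (u j : ℤ) - (u' j : ℤ) = (w j : ℤ) - (w' j : ℤ)) :
    u = w ∧ u' = w' := by
  constructor <;> funext j <;>
    · have a1 := h1 j
      have a2 := h2 j
      have a3 := hd j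
      omega

end PoisAux

namespace PoisAux
variable {J : ℕ}

theorem B_basis : PoisIsMarkovBasis J (Bset J) := by
  refine ⟨fun z hz => Bmove hz, fun z hz => Bsym hz, ?_⟩
  intro x y hf
  have hd : deg x = deg y := hf.1
  have hw : ws x = ws y := hf.2
  apply conn (S := Bset J) (fun z hz => Bsym hz) ?_ x y hd hw
  intro a b c d hsum
  by_cases he : E (J := J) a + E b = E c + E d
  · rw [he]; exact connects_refl _ _
  · exact connects_single (Bpair hsum he)

theorem step_ne {M : Set (Fin J → ℤ)} (hmv : ∀ z ∈ M, PoisIsMove J z)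
    {u w : Fin J → ℕ} (hstep : stepRel M u w) : u ≠ w := by
  intro h
  apply (hmv _ hstep).1
  funext j
  rw [h]
  simp

theorem rtg_inter_B {M : Set (Fin J → ℤ)} (hmv : ∀ z ∈ M, PoisIsMove J z)
    {u v : Fin J → ℕ}
    (h : Relation.ReflTransGen (stepRel M) u v) (hd : deg u = 2) :
    Relation.ReflTransGen (stepRel (M ∩ Bset J)) u v := by
  induction h using Relation.ReflTransGen.head_induction_on with
  | refl => exact Relation.ReflTransGen.refl
  | head hstep htail ih =>
      rename_i p q
      have hf := step_fiber hmv hstep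
      have hdq : deg q = 2 := by omega
      have hstep' : stepRel (M ∩ Bset J) p q :=
        ⟨hstep, diff_mem_B hd hdq hf.2 (step_ne hmv hstep)⟩
      exact Relation.ReflTransGen.head hstep' (ih hdq)

theorem minimal_subset_B {M : Set (Fin J → ℤ)}
    (hM : PoisIsMinimalMarkovBasis J M) : M ⊆ Bset J := by
  obtain ⟨⟨hmv, hsym, hconn⟩, hmin⟩ := hM
  by_contra hsub
  have hsymI : ∀ z ∈ M ∩ Bset J, -z ∈ M ∩ Bset J :=
    fun z hz => ⟨hsym z hz.1, Bsym hz.2⟩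
  have hbasis : PoisIsMarkovBasis J (M ∩ Bset J) := by
    refine ⟨fun z hz => hmv z hz.1, hsymI, ?_⟩
    intro x y hf
    apply conn hsymI ?_ x y hf.1 hf.2
    intro a b c d hsum
    have h1 : deg (E (J := J) a + E b) = deg (E (J := J) c + E d) := by
      rw [deg_pair, deg_pair]
    have h2 : ws (E (J := J) a + E b) = ws (E (J := J) c + E d) := by
      rw [ws_pair, ws_pair]; omega
    have hcon := hconn (E a + E b) (E c + E d) ⟨h1, h2⟩
    exact connects_of_rtg (rtg_inter_B hmv (rtg_of_connects hcon) (deg_pair a b))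
  have hproper : M ∩ Bset J ⊂ M := by
    refine ⟨Set.inter_subset_left, fun hcont => ?_⟩
    apply hsub
    intro z hz
    exact (hcont hz).2
  exact hmin _ hproper hsymI hbasis

end PoisAux


namespace PoisAux
variable {J : ℕ}

open Classical in
/-- the "center" of each degree-2 fiber -/
noncomputable def Cfun (v0 : Fin J → ℕ) (s0 : ℕ) : ℕ → (Fin J → ℕ) := fun s =>
  if s = s0 then v0
  else if h : ∃ u : Fin J → ℕ, deg u = 2 ∧ ws u = s then h.choose else 0

/-- the star-shaped Markov basis through the centers -/
noncomputable def Mstar (v0 : Fin J → ℕ) (s0 : ℕ) : Set (Fin J → ℤ) :=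
  {z : Fin J → ℤ | ∃ u : Fin J → ℕ, deg u = 2 ∧ u ≠ Cfun v0 s0 (ws u) ∧
    (z = (fun j => ((u j : ℕ) : ℤ) - ((Cfun v0 s0 (ws u) j : ℕ) : ℤ)) ∨
     z = (fun j => ((Cfun v0 s0 (ws u) j : ℕ) : ℤ) - ((u j : ℕ) : ℤ)))}

section
variable {v0 : Fin J → ℕ} {s0 : ℕ}

theorem Cfun_fiber (hv0 : deg v0 = 2) (hs0 : ws v0 = s0) (s : ℕ) (u : Fin J → ℕ) (hdu : deg u = 2) (hws : ws u = s) :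
    deg (Cfun v0 s0 s) = 2 ∧ ws (Cfun v0 s0 s) = s := by
  by_cases hs : s = s0
  · rw [Cfun, if_pos hs]
    exact ⟨hv0, by rw [hs0, hs]⟩
  · have hex : ∃ u : Fin J → ℕ, deg u = 2 ∧ ws u = s := ⟨u, hdu, hws⟩
    rw [Cfun, if_neg hs, dif_pos hex]
    exact hex.choose_spec

theorem Mstar_sub_B (hv0 : deg v0 = 2) (hs0 : ws v0 = s0) : Mstar v0 s0 ⊆ Bset J := by
  rintro z ⟨u, hdu, hne, hor | hor⟩ <;>
    obtain ⟨hC1, hC2⟩ := Cfun_fiber hv0 hs0 (ws u) u hdu rfl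
  · rw [hor]
    exact diff_mem_B hC1 hdu hC2 (fun h => hne h.symm)
  · rw [hor]
    exact diff_mem_B hdu hC1 hC2.symm hne

theorem Mstar_symm : ∀ z ∈ Mstar v0 s0, -z ∈ Mstar (J := J) v0 s0 := by
  rintro z ⟨u, hdu, hne, hor | hor⟩
  · exact ⟨u, hdu, hne, Or.inr (by rw [hor]; funext j; simp)⟩
  · exact ⟨u, hdu, hne, Or.inl (by rw [hor]; funext j; simp)⟩

theorem Mstar_connects_center (u : Fin J → ℕ) (hdu : deg u = 2) :
    PoisConnects J (Mstar v0 s0) u (Cfun v0 s0 (ws u)) := by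
  by_cases hne : u = Cfun v0 s0 (ws u)
  · rw [← hne]; exact connects_refl _ _
  · exact connects_single ⟨u, hdu, hne, Or.inr rfl⟩

theorem Mstar_basis (hv0 : deg v0 = 2) (hs0 : ws v0 = s0) : PoisIsMarkovBasis J (Mstar v0 s0) := by
  refine ⟨fun z hz => Bmove (Mstar_sub_B hv0 hs0 hz), Mstar_symm, ?_⟩
  intro x y hf
  apply conn Mstar_symm ?_ x y hf.1 hf.2
  intro a b c d hsum
  have hws : ws (E (J := J) c + E d) = ws (E (J := J) a + E b) := by
    rw [ws_pair, ws_pair]; omega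
  have h1 : PoisConnects J (Mstar v0 s0) (E a + E b) (Cfun v0 s0 (ws (E a + E b))) :=
    Mstar_connects_center _ (deg_pair a b)
  have h2 : PoisConnects J (Mstar v0 s0) (E c + E d) (Cfun v0 s0 (ws (E a + E b))) := by
    rw [← hws]
    exact Mstar_connects_center _ (deg_pair c d)
  exact connects_trans h1 (connects_symm Mstar_symm h2)

theorem Mstar_minimal (hv0 : deg v0 = 2) (hs0 : ws v0 = s0) : PoisIsMinimalMarkovBasis J (Mstar v0 s0) := by
  refine ⟨Mstar_basis hv0 hs0, ?_⟩
  intro M' hsub hsymM' hbasis'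
  obtain ⟨z, hzM, hzM'⟩ := Set.exists_of_ssubset hsub
  obtain ⟨u1, hdu1, hneu1, hor⟩ := hzM
  set C1 : Fin J → ℕ := Cfun v0 s0 (ws u1) with hC1def
  -- both orientations of the removed edge are missing from M'
  have hnegfun : (fun j => ((u1 j : ℕ) : ℤ) - ((C1 j : ℕ) : ℤ))
      = -(fun j => ((C1 j : ℕ) : ℤ) - ((u1 j : ℕ) : ℤ)) := by
    funext j; simp
  have hboth : (fun j => ((u1 j : ℕ) : ℤ) - ((C1 j : ℕ) : ℤ)) ∉ M' ∧
      (fun j => ((C1 j : ℕ) : ℤ) - ((u1 j : ℕ) : ℤ)) ∉ M' := by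
    rcases hor with h | h
    · rw [h] at hzM'
      refine ⟨hzM', fun hmem => hzM' ?_⟩
      have := hsymM' _ hmem
      rwa [← hnegfun] at this
    · rw [h] at hzM'
      refine ⟨fun hmem => hzM' ?_, hzM'⟩
      have := hsymM' _ hmem
      have hnegfun2 : (fun j => ((C1 j : ℕ) : ℤ) - ((u1 j : ℕ) : ℤ))
          = -(fun j => ((u1 j : ℕ) : ℤ) - ((C1 j : ℕ) : ℤ)) := by
        funext j; simp
      rwa [← hnegfun2] at this
  -- M' must connect u1 to the center of its fiber
  obtain ⟨hCd, hCw⟩ := Cfun_fiber hv0 hs0 (ws u1) u1 hdu1 rfl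
  have hfib : PoisSameFiber J u1 C1 := by
    constructor
    · show deg u1 = deg C1
      rw [hdu1, hC1def, hCd]
    · show ws u1 = ws C1
      rw [hC1def, hCw]
  have hconn' := hbasis'.2.2 u1 C1 hfib
  rcases (Relation.ReflTransGen.cases_head (rtg_of_connects hconn')) with heq | ⟨w, hstep, -⟩
  · exact hneu1 heq
  · -- analyze the first step out of u1
    have hmv' : ∀ z ∈ M', PoisIsMove J z := hbasis'.1
    have hf := step_fiber hmv' hstep
    have hdw : deg w = 2 := by omega
    have hnuw : u1 ≠ w := step_ne hmv' hstep
    obtain ⟨u2, hdu2, hneu2, hor2⟩ := hsub.1 hstep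
    obtain ⟨hC2d, hC2w⟩ := Cfun_fiber hv0 hs0 (ws u2) u2 hdu2 rfl
    -- disjointness of supports within each pair
    have hdisj2 : ∀ j, u2 j = 0 ∨ Cfun v0 s0 (ws u2) j = 0 := by
      intro j
      by_contra hcon
      push_neg at hcon
      exact hneu2 (deg2_shared hdu2 hC2d hC2w.symm
        (Nat.pos_of_ne_zero hcon.1) (Nat.pos_of_ne_zero hcon.2))
    have hdisjw : ∀ j, w j = 0 ∨ u1 j = 0 := by
      intro j
      by_contra hcon
      push_neg at hcon
      exact hnuw (deg2_shared hdu1 hdw hf.2 (Nat.pos_of_ne_zero hcon.2)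
        (Nat.pos_of_ne_zero hcon.1))
    rcases hor2 with h2 | h2
    · -- step is  u2 - C(ws u2)  =  w - u1 : forces u1 = center of its fiber
      have hps := pairs_eq hdisj2 hdisjw
        (fun j => (congrFun h2 j).symm)
      have hwsu2 : ws u2 = ws u1 := by rw [hps.1, ← hf.2]
      apply hneu1
      rw [← hps.2, hwsu2]
    · -- step is  C(ws u2) - u2  =  w - u1  : the removed edge itself
      have hdisj2' : ∀ j, Cfun v0 s0 (ws u2) j = 0 ∨ u2 j = 0 :=
        fun j => (hdisj2 j).symm
      have hps := pairs_eq hdisj2' hdisjw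
        (fun j => (congrFun h2 j).symm)
      have hu2u1 : u2 = u1 := hps.2
      apply hboth.2
      have hCw1 : Cfun v0 s0 (ws u2) = C1 := by
        rw [hu2u1]
      have hC1w : C1 = w := by
        rw [← hCw1]
        exact hps.1
      rw [hC1w]
      exact hstep
end

end PoisAux


namespace PoisAux
variable {J : ℕ}

theorem exists_minimal {z0 : Fin J → ℤ} (hz0 : z0 ∈ Bset J) :
    ∃ M : Set (Fin J → ℤ), PoisIsMinimalMarkovBasis J M ∧ z0 ∈ M := by
  obtain ⟨j1, j2, j3, j4, h1, h2, h3, h4, hor⟩ := hz0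
  have h1' : (j1:ℕ) < (j2:ℕ) := h1
  have h2' : (j2:ℕ) ≤ (j3:ℕ) := h2
  have h3' : (j3:ℕ) < (j4:ℕ) := h3
  set v0 : Fin J → ℕ := E j1 + E j4 with hv0def
  set u0 : Fin J → ℕ := E j2 + E j3 with hu0def
  set s0 : ℕ := ws v0 with hs0def
  have hv0 : deg v0 = 2 := deg_pair _ _
  have hs0 : ws v0 = s0 := rfl
  have hws_u0 : ws u0 = s0 := by
    rw [hu0def, hs0def, hv0def, ws_pair, ws_pair]
    omega
  have hC0 : Cfun v0 s0 (ws u0) = v0 := by rw [hws_u0, Cfun, if_pos rfl]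
  have hneu0 : u0 ≠ Cfun v0 s0 (ws u0) := by
    rw [hC0]
    intro h
    have hfj := congrFun h j1
    have e1 : u0 j1 = 0 := by
      have n2 : ¬ (j1 = j2) := by intro hh; rw [hh] at h1'; omega
      have n3 : ¬ (j1 = j3) := by intro hh; rw [hh] at h1'; omega
      simp [hu0def, E_apply, Pi.add_apply, n2, n3]
    have e2 : v0 j1 = 1 := by
      have n4 : ¬ (j1 = j4) := by intro hh; rw [hh] at h1'; omega
      simp [hv0def, E_apply, Pi.add_apply, n4]
    rw [e1, e2] at hfj
    omega
  refine ⟨Mstar v0 s0, Mstar_minimal hv0 hs0, ?_⟩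
  have hposfun : (Pi.single j1 (1 : ℤ) + Pi.single j4 (1 : ℤ)
      - Pi.single j2 (1 : ℤ) - Pi.single j3 (1 : ℤ))
      = (fun j => ((Cfun v0 s0 (ws u0) j : ℕ) : ℤ) - ((u0 j : ℕ) : ℤ)) := by
    rw [hC0]
    funext j
    simp only [hu0def, hv0def, Pi.add_apply, Pi.sub_apply, Pi.single_apply, E_apply]
    push_cast
    ring
  rcases hor with h | h
  · exact ⟨u0, deg_pair _ _, hneu0, Or.inr (by rw [h, hposfun])⟩
  · refine ⟨u0, deg_pair _ _, hneu0, Or.inl ?_⟩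
    rw [h, hposfun]
    funext j
    simp

end PoisAux


/-- B = { ±(e_{j1} + e_{j4} − e_{j2} − e_{j3}) :
1 ≤ j1 < j2 ≤ j3 < j4 ≤ J, j2 − j1 = j4 − j3 } is the minimum-fiber Markov
basis for the univariate Poisson regression configuration: B is a Markov
basis and B equals the union of all inclusion-minimal Markov bases. -/
theorem minimum_fiber_markov_basis_univariate_poisson (J : ℕ) (hJ : 1 ≤ J)
    (B : Set (Fin J → ℤ))
    (hB : B = {z : Fin J → ℤ | ∃ j1 j2 j3 j4 : Fin J,
        j1 < j2 ∧ j2 ≤ j3 ∧ j3 < j4 ∧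
        (j2 : ℕ) - (j1 : ℕ) = (j4 : ℕ) - (j3 : ℕ) ∧
        (z = Pi.single j1 (1 : ℤ) + Pi.single j4 (1 : ℤ)
              - Pi.single j2 (1 : ℤ) - Pi.single j3 (1 : ℤ) ∨
         z = -(Pi.single j1 (1 : ℤ) + Pi.single j4 (1 : ℤ)
              - Pi.single j2 (1 : ℤ) - Pi.single j3 (1 : ℤ)))}) :
    PoisIsMarkovBasis J B ∧
    B = ⋃₀ {M : Set (Fin J → ℤ) | PoisIsMinimalMarkovBasis J M} := by
  have hBB : B = PoisAux.Bset J := hB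
  constructor
  · rw [hBB]
    exact PoisAux.B_basis
  · rw [hBB]
    apply Set.eq_of_subset_of_subset
    · intro z hz
      obtain ⟨M, hM, hzM⟩ := PoisAux.exists_minimal hz
      exact ⟨M, hM, hzM⟩
    · rintro z ⟨M, hM, hzM⟩
      exact PoisAux.minimal_subset_B hM hzM
end

section
/- Let J ≥ 1 and let B = { ±(e_{j1} + e_{j4} − e_{j2} − e_{j3}) : 1 ≤ j1 < j2 ≤ j3 < j4 ≤ J, j2 − j1 = j4 − j3 }. For any two distinct tables x, y ∈ ℕ^J with Σ_{j=1}^J x_j = Σ_{j=1}^J y_j and Σ_{j=1}^J j·x_j = Σ_{j=1}^J j·y_j, there exists z ∈ B such that either x + z ∈ ℕ^J and ‖(x + z) − y‖₁ < ‖x − y‖₁, or y + z ∈ ℕ^J and ‖x − (y + z)‖₁ < ‖x − y‖₁; that is, B is norm-reducing for the univariate Poisson regression configuration. -/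
private lemma exists_pos_of_ne' {J : ℕ} (d : Fin J → ℤ) (hne : ∃ j, d j ≠ 0)
    (h0 : ∑ j, d j = 0) : ∃ p, 0 < d p := by
  by_contra h
  push_neg at h
  obtain ⟨j, hj⟩ := hne
  exact hj ((Finset.sum_eq_zero_iff_of_nonpos (fun i _ => h i)).1 h0 j (Finset.mem_univ j))

private lemma exists_descent' {J : ℕ} (d : Fin J → ℤ) (hne : ∃ j, d j ≠ 0)
    (h0 : ∑ j, d j = 0) (h1 : ∑ j : Fin J, ((j : ℕ) : ℤ) * d j = 0) :
    ∃ i j : Fin J, i < j ∧ 0 < d i ∧ d j < 0 := by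
  obtain ⟨p, hp⟩ := exists_pos_of_ne' d hne h0
  by_contra hno
  push_neg at hno
  set s : Finset (Fin J) := Finset.univ.filter (fun j => 0 < d j) with hs
  have hsne : s.Nonempty := ⟨p, by simp [hs, hp]⟩
  set t := s.min' hsne with htdef
  have htpos : 0 < d t := by
    have := s.min'_mem hsne
    simp [hs] at this
    exact this
  have htmin : ∀ j, 0 < d j → t ≤ j := fun j hj => s.min'_le j (by simp [hs, hj])
  have hneglt : ∀ j, d j < 0 → (j : ℕ) < (t : ℕ) := by
    intro j hj
    by_contra hc
    push_neg at hc
    have htj : t ≤ j := hc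
    rcases eq_or_lt_of_le htj with heq | hlt
    · rw [heq] at htpos; linarith
    · exact absurd (hno t j hlt htpos) (not_le.2 hj)
  have hS0 : ∑ j : Fin J, (((j : ℕ) : ℤ) - (((t : ℕ) : ℤ) - 1)) * d j = 0 := by
    have he : ∀ j : Fin J, (((j : ℕ) : ℤ) - (((t : ℕ) : ℤ) - 1)) * d j
        = ((j : ℕ) : ℤ) * d j - (((t : ℕ) : ℤ) - 1) * d j := fun j => by ring
    rw [Finset.sum_congr rfl (fun j _ => he j), Finset.sum_sub_distrib, h1,
      ← Finset.mul_sum, h0]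
    ring
  have hSpos : 0 < ∑ j : Fin J, (((j : ℕ) : ℤ) - (((t : ℕ) : ℤ) - 1)) * d j := by
    apply Finset.sum_pos'
    · intro j _
      rcases lt_trichotomy (d j) 0 with h | h | h
      · have hj := hneglt j h
        have h2 : (((j : ℕ) : ℤ) - (((t : ℕ) : ℤ) - 1)) ≤ 0 := by omega
        nlinarith
      · simp [h]
      · have hj : (t : ℕ) ≤ (j : ℕ) := htmin j h
        have h2 : 0 ≤ (((j : ℕ) : ℤ) - (((t : ℕ) : ℤ) - 1)) := by omega
        exact mul_nonneg h2 h.le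
    · refine ⟨t, Finset.mem_univ t, ?_⟩
      nlinarith
  linarith

private lemma quad_of_triple' {J : ℕ} (d : Fin J → ℤ) (a b c : Fin J)
    (hab : a < b) (hbc : b < c) (ha : 0 < d a) (hb : d b < 0) (hc : 0 < d c) :
    ∃ j1 j2 j3 j4 : Fin J, j1 < j2 ∧ j2 ≤ j3 ∧ j3 < j4 ∧
      (j2 : ℕ) - (j1 : ℕ) = (j4 : ℕ) - (j3 : ℕ) ∧
      0 < d j1 ∧ 0 < d j4 ∧ (d j2 < 0 ∨ d j3 < 0) := by
  have hab' : (a : ℕ) < (b : ℕ) := hab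
  have hbc' : (b : ℕ) < (c : ℕ) := hbc
  have hcJ : (c : ℕ) < J := c.isLt
  rcases le_or_gt ((b : ℕ) - (a : ℕ)) ((c : ℕ) - (b : ℕ)) with hg | hg
  · refine ⟨a, b, ⟨(c : ℕ) - ((b : ℕ) - (a : ℕ)), by omega⟩, c,
      hab, ?_, ?_, ?_, ha, hc, Or.inl hb⟩
    · rw [Fin.le_def]; simp; try omega
    · rw [Fin.lt_def]; simp; try omega
    · simp; try omega
  · refine ⟨a, ⟨(a : ℕ) + ((c : ℕ) - (b : ℕ)), by omega⟩, b, c,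
      ?_, ?_, hbc, ?_, ha, hc, Or.inr hb⟩
    · rw [Fin.lt_def]; simp; try omega
    · rw [Fin.le_def]; simp; try omega
    · simp; try omega

private lemma exists_pattern' {J : ℕ} (d : Fin J → ℤ) (hne : ∃ j, d j ≠ 0)
    (h0 : ∑ j, d j = 0) (h1 : ∑ j : Fin J, ((j : ℕ) : ℤ) * d j = 0) :
    (∃ a b c : Fin J, a < b ∧ b < c ∧ 0 < d a ∧ d b < 0 ∧ 0 < d c) ∨
    (∃ a b c : Fin J, a < b ∧ b < c ∧ 0 < (-d) a ∧ (-d) b < 0 ∧ 0 < (-d) c) := by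
  obtain ⟨i, j, hij, hi, hj⟩ := exists_descent' d hne h0 h1
  have hne' : ∃ j, (-d) j ≠ 0 := by
    obtain ⟨m, hm⟩ := hne; exact ⟨m, by simpa using hm⟩
  have h0' : ∑ j, (-d) j = 0 := by
    simp only [Pi.neg_apply]
    rw [Finset.sum_neg_distrib, h0, neg_zero]
  have h1' : ∑ j : Fin J, ((j : ℕ) : ℤ) * (-d) j = 0 := by
    simp only [Pi.neg_apply, mul_neg]
    rw [Finset.sum_neg_distrib, h1, neg_zero]
  obtain ⟨k, l, hkl, hk, hl⟩ := exists_descent' (-d) hne' h0' h1'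
  have hk' : d k < 0 := by simpa using hk
  have hl' : 0 < d l := by simpa using hl
  have hik : i ≠ k := fun h => by rw [h] at hi; linarith
  rcases hik.lt_or_gt with h | h
  · exact Or.inl ⟨i, k, l, h, hkl, hi, hk', hl'⟩
  · exact Or.inr ⟨k, i, j, h, hij, by simpa using hk', by simpa using hi, by simpa using hj⟩

private lemma reduce_step' {J : ℕ} (x y : Fin J → ℕ) (j1 j2 j3 j4 : Fin J)
    (h12 : j1 < j2) (h23 : j2 ≤ j3) (h34 : j3 < j4)
    (h1 : (y j1 : ℤ) < x j1) (h4 : (y j4 : ℤ) < x j4)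
    (hmid : (x j2 : ℤ) < y j2 ∨ (x j3 : ℤ) < y j3) :
    (∀ j, 0 ≤ (x j : ℤ) +
      ((-(Pi.single j1 (1 : ℤ) + Pi.single j4 (1 : ℤ)
          - Pi.single j2 (1 : ℤ) - Pi.single j3 (1 : ℤ)) : Fin J → ℤ)) j) ∧
    ∑ j : Fin J, |((x j : ℤ) +
      ((-(Pi.single j1 (1 : ℤ) + Pi.single j4 (1 : ℤ)
          - Pi.single j2 (1 : ℤ) - Pi.single j3 (1 : ℤ)) : Fin J → ℤ)) j) - (y j : ℤ)|
      < ∑ j : Fin J, |(x j : ℤ) - (y j : ℤ)| := by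
  set z : Fin J → ℤ := (-(Pi.single j1 (1 : ℤ) + Pi.single j4 (1 : ℤ)
      - Pi.single j2 (1 : ℤ) - Pi.single j3 (1 : ℤ)) : Fin J → ℤ) with hz
  have zval : ∀ jj, z jj = (if jj = j2 then 1 else 0) + (if jj = j3 then 1 else 0)
      - (if jj = j1 then 1 else 0) - (if jj = j4 then 1 else 0) := by
    intro jj
    simp [hz, Pi.single_apply]
    ring
  have e12 : j1 ≠ j2 := ne_of_lt h12
  have e13 : j1 ≠ j3 := ne_of_lt (lt_of_lt_of_le h12 h23)
  have e14 : j1 ≠ j4 := ne_of_lt (lt_trans (lt_of_lt_of_le h12 h23) h34)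
  have e24 : j2 ≠ j4 := ne_of_lt (lt_of_le_of_lt h23 h34)
  have e34 : j3 ≠ j4 := ne_of_lt h34
  constructor
  · intro jj
    rw [zval jj]
    by_cases hj1 : jj = j1
    · subst hj1
      simp [e12, e13, e14]
      omega
    · by_cases hj4 : jj = j4
      · subst hj4
        simp [e24.symm, e34.symm, e14.symm]
        omega
      · rw [if_neg hj1, if_neg hj4]
        split_ifs <;> omega
  · classical
    set s : Finset (Fin J) := {j1, j2, j3, j4} with hsdef
    have hcompl : ∀ jj ∈ sᶜ, |(x jj : ℤ) + z jj - (y jj : ℤ)| = |(x jj : ℤ) - (y jj : ℤ)| := by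
      intro jj hjj
      simp only [hsdef, Finset.mem_compl, Finset.mem_insert, Finset.mem_singleton,
        not_or] at hjj
      obtain ⟨n1, n2, n3, n4⟩ := hjj
      rw [zval jj, if_neg n2, if_neg n3, if_neg n1, if_neg n4]
      norm_num
    rw [← Finset.sum_add_sum_compl s (fun j => |(x j : ℤ) + z j - (y j : ℤ)|),
        ← Finset.sum_add_sum_compl s (fun j => |(x j : ℤ) - (y j : ℤ)|)]
    have hceq : ∑ jj ∈ sᶜ, |(x jj : ℤ) + z jj - (y jj : ℤ)|
        = ∑ jj ∈ sᶜ, |(x jj : ℤ) - (y jj : ℤ)| := Finset.sum_congr rfl hcompl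
    rw [hceq]
    apply (add_lt_add_iff_right _).2
    have z1 : z j1 = -1 := by rw [zval]; simp [e12, e13, e14]
    have z4 : z j4 = -1 := by rw [zval]; simp [e24.symm, e34.symm, e14.symm]
    rcases eq_or_ne j2 j3 with rfl | hne23
    · have hs' : s = {j1, j2, j4} := by simp [hsdef]
      have z2 : z j2 = 2 := by rw [zval]; simp [e12.symm, e24]
      have m1 : j1 ∉ ({j2, j4} : Finset (Fin J)) := by simp [e12, e14]
      have m2 : j2 ∉ ({j4} : Finset (Fin J)) := by simp [e24]
      rw [hs', Finset.sum_insert m1, Finset.sum_insert m2, Finset.sum_singleton,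
        Finset.sum_insert m1, Finset.sum_insert m2, Finset.sum_singleton,
        z1, z2, z4]
      have hm : (x j2 : ℤ) < y j2 := by rcases hmid with h | h <;> exact h
      simp only [Int.abs_eq_natAbs]
      omega
    · have z2 : z j2 = 1 := by rw [zval]; simp [e12.symm, hne23, e24]
      have z3 : z j3 = 1 := by rw [zval]; simp [e13.symm, hne23.symm, e34]
      have m1 : j1 ∉ ({j2, j3, j4} : Finset (Fin J)) := by simp [e12, e13, e14]
      have m2 : j2 ∉ ({j3, j4} : Finset (Fin J)) := by simp [hne23, e24]
      have m3 : j3 ∉ ({j4} : Finset (Fin J)) := by simp [e34]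
      rw [hsdef]
      rw [Finset.sum_insert m1, Finset.sum_insert m2, Finset.sum_insert m3,
        Finset.sum_singleton, Finset.sum_insert m1, Finset.sum_insert m2,
        Finset.sum_insert m3, Finset.sum_singleton, z1, z2, z3, z4]
      simp only [Int.abs_eq_natAbs]
      omega

/-- B = { ±(e_{j1} + e_{j4} − e_{j2} − e_{j3}) :
1 ≤ j1 < j2 ≤ j3 < j4 ≤ J, j2 − j1 = j4 − j3 } is norm-reducing for the
univariate Poisson regression configuration: for any two distinct tables
x, y in the same fiber there is z ∈ B which can be added to x or to y,
strictly reducing the L₁ distance between them. -/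
theorem norm_reducing_univariate_poisson (J : ℕ) (hJ : 1 ≤ J)
    (B : Set (Fin J → ℤ))
    (hB : B = {z : Fin J → ℤ | ∃ j1 j2 j3 j4 : Fin J,
        j1 < j2 ∧ j2 ≤ j3 ∧ j3 < j4 ∧
        (j2 : ℕ) - (j1 : ℕ) = (j4 : ℕ) - (j3 : ℕ) ∧
        (z = Pi.single j1 (1 : ℤ) + Pi.single j4 (1 : ℤ)
              - Pi.single j2 (1 : ℤ) - Pi.single j3 (1 : ℤ) ∨
         z = -(Pi.single j1 (1 : ℤ) + Pi.single j4 (1 : ℤ)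
              - Pi.single j2 (1 : ℤ) - Pi.single j3 (1 : ℤ)))})
    (x y : Fin J → ℕ) (hxy : x ≠ y)
    (hsum : ∑ j : Fin J, x j = ∑ j : Fin J, y j)
    (hwsum : ∑ j : Fin J, ((j : ℕ) + 1) * x j = ∑ j : Fin J, ((j : ℕ) + 1) * y j) :
    ∃ z ∈ B,
      ((∀ j, 0 ≤ (x j : ℤ) + z j) ∧
        ∑ j : Fin J, |((x j : ℤ) + z j) - (y j : ℤ)|
          < ∑ j : Fin J, |(x j : ℤ) - (y j : ℤ)|) ∨
      ((∀ j, 0 ≤ (y j : ℤ) + z j) ∧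
        ∑ j : Fin J, |(x j : ℤ) - ((y j : ℤ) + z j)|
          < ∑ j : Fin J, |(x j : ℤ) - (y j : ℤ)|) := by
  set d : Fin J → ℤ := fun j => (x j : ℤ) - (y j : ℤ) with hd
  have hne : ∃ j, d j ≠ 0 := by
    by_contra h
    push_neg at h
    apply hxy
    funext j
    have := h j
    simp [hd] at this
    omega
  have hsx : ∑ j : Fin J, (x j : ℤ) = ∑ j : Fin J, (y j : ℤ) := by
    have := congrArg (fun n : ℕ => (n : ℤ)) hsum
    push_cast at this
    exact this
  have h0 : ∑ j, d j = 0 := by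
    simp only [hd]
    rw [Finset.sum_sub_distrib, hsx, sub_self]
  have hw : ∑ j : Fin J, (((j : ℕ) : ℤ) + 1) * (x j : ℤ)
      = ∑ j : Fin J, (((j : ℕ) : ℤ) + 1) * (y j : ℤ) := by
    have := congrArg (fun n : ℕ => (n : ℤ)) hwsum
    push_cast at this
    exact this
  have h1 : ∑ j : Fin J, ((j : ℕ) : ℤ) * d j = 0 := by
    have he : ∀ j : Fin J, ((j : ℕ) : ℤ) * d j
        = (((j : ℕ) : ℤ) + 1) * (x j : ℤ) - (((j : ℕ) : ℤ) + 1) * (y j : ℤ)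
          - ((x j : ℤ) - (y j : ℤ)) := fun j => by simp [hd]; ring
    rw [Finset.sum_congr rfl (fun j _ => he j), Finset.sum_sub_distrib,
      Finset.sum_sub_distrib, hw, Finset.sum_sub_distrib, hsx]
    ring
  rcases exists_pattern' d hne h0 h1 with ⟨a, b, c, hab, hbc, ha, hb, hc⟩ |
    ⟨a, b, c, hab, hbc, ha, hb, hc⟩
  · obtain ⟨j1, j2, j3, j4, h12, h23, h34, hgap, H1, H4, Hmid⟩ :=
      quad_of_triple' d a b c hab hbc ha hb hc
    simp only [hd] at H1 H4 Hmid
    refine ⟨-(Pi.single j1 (1 : ℤ) + Pi.single j4 (1 : ℤ)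
        - Pi.single j2 (1 : ℤ) - Pi.single j3 (1 : ℤ)), ?_, Or.inl ?_⟩
    · rw [hB]
      exact ⟨j1, j2, j3, j4, h12, h23, h34, hgap, Or.inr rfl⟩
    · exact reduce_step' x y j1 j2 j3 j4 h12 h23 h34 (by omega) (by omega)
        (by rcases Hmid with h | h
            · exact Or.inl (by omega)
            · exact Or.inr (by omega))
  · obtain ⟨j1, j2, j3, j4, h12, h23, h34, hgap, H1, H4, Hmid⟩ :=
      quad_of_triple' (-d) a b c hab hbc ha hb hc
    simp only [Pi.neg_apply, hd] at H1 H4 Hmid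
    refine ⟨-(Pi.single j1 (1 : ℤ) + Pi.single j4 (1 : ℤ)
        - Pi.single j2 (1 : ℤ) - Pi.single j3 (1 : ℤ)), ?_, Or.inr ?_⟩
    · rw [hB]
      exact ⟨j1, j2, j3, j4, h12, h23, h34, hgap, Or.inr rfl⟩
    · have hred := reduce_step' y x j1 j2 j3 j4 h12 h23 h34 (by omega) (by omega)
        (by rcases Hmid with h | h
            · exact Or.inl (by omega)
            · exact Or.inr (by omega))
      refine ⟨hred.1, ?_⟩
      have e1 : ∀ j : Fin J, |(x j : ℤ) - ((y j : ℤ) +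
          ((-(Pi.single j1 (1 : ℤ) + Pi.single j4 (1 : ℤ)
            - Pi.single j2 (1 : ℤ) - Pi.single j3 (1 : ℤ)) : Fin J → ℤ)) j)|
          = |((y j : ℤ) + ((-(Pi.single j1 (1 : ℤ) + Pi.single j4 (1 : ℤ)
            - Pi.single j2 (1 : ℤ) - Pi.single j3 (1 : ℤ)) : Fin J → ℤ)) j) - (x j : ℤ)| :=
        fun j => abs_sub_comm _ _
      have e2 : ∀ j : Fin J, |(x j : ℤ) - (y j : ℤ)| = |(y j : ℤ) - (x j : ℤ)| :=
        fun j => abs_sub_comm _ _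
      rw [Finset.sum_congr rfl (fun j _ => e1 j), Finset.sum_congr rfl (fun j _ => e2 j)]
      exact hred.2
end

section
/- Let x, y ∈ ℕ^J with x ≠ y, Σ_{j=1}^J x_j = Σ_{j=1}^J y_j and Σ_{j=1}^J j·x_j = Σ_{j=1}^J j·y_j. Let j1 = min{ k : x_k ≠ y_k } and suppose x_{j1} > y_{j1}. Then there exists j2 > j1 with x_{j2} < y_{j2}; moreover, letting j2 be the smallest such index, there exists j4 > j2 with x_{j4} > y_{j4}. -/
/-- Let x ≠ y be tables in the same fiber of the univariate
Poisson regression configuration, let j1 be the smallest index where they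
differ, and suppose x_{j1} > y_{j1}. Then there exists j2 > j1 with
x_{j2} < y_{j2}; moreover, for the smallest such j2 there exists j4 > j2
with x_{j4} > y_{j4}. -/
theorem exists_sign_change_indices (J : ℕ) (hJ : 1 ≤ J)
    (x y : Fin J → ℕ) (hxy : x ≠ y)
    (hsum : ∑ j : Fin J, x j = ∑ j : Fin J, y j)
    (hwsum : ∑ j : Fin J, ((j : ℕ) + 1) * x j = ∑ j : Fin J, ((j : ℕ) + 1) * y j)
    (j1 : Fin J) (hne : x j1 ≠ y j1) (hmin : ∀ k : Fin J, k < j1 → x k = y k)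
    (hgt : x j1 > y j1) :
    (∃ j2 : Fin J, j1 < j2 ∧ x j2 < y j2) ∧
    ∀ j2 : Fin J, j1 < j2 → x j2 < y j2 →
      (∀ k : Fin J, j1 < k → k < j2 → ¬ x k < y k) →
      ∃ j4 : Fin J, j2 < j4 ∧ x j4 > y j4 := by
  set d : Fin J → ℤ := fun j => (x j : ℤ) - (y j : ℤ) with hd
  have hdsum : ∑ j : Fin J, d j = 0 := by
    simp only [hd, Finset.sum_sub_distrib, sub_eq_zero]
    exact_mod_cast hsum
  have hdwsum : ∑ j : Fin J, ((j : ℤ) + 1) * d j = 0 := by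
    have : ∑ j : Fin J, ((j : ℤ) + 1) * (x j : ℤ)
        = ∑ j : Fin J, ((j : ℤ) + 1) * (y j : ℤ) := by
      have := congrArg (Nat.cast : ℕ → ℤ) hwsum
      push_cast at this
      convert this using 2 <;> ring
    simp only [hd, mul_sub, Finset.sum_sub_distrib, this]
    ring
  have hdj1 : 0 < d j1 := by
    simp only [hd]; omega
  constructor
  · by_contra h
    push_neg at h
    have hnonneg : ∀ j ∈ Finset.univ, 0 ≤ d j := by
      intro j _
      rcases lt_trichotomy j j1 with hlt | heq | hgt'
      · have := hmin j hlt; simp [hd, this]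
      · subst heq; exact le_of_lt hdj1
      · have := h j hgt'; simp only [hd]; omega
    have := (Finset.sum_eq_zero_iff_of_nonneg hnonneg).mp hdsum j1 (Finset.mem_univ _)
    omega
  · intro j2 hj12 hlt2 hbetween
    by_contra h
    push_neg at h
    -- all terms of Σ ((j2+1) - (j+1)) * d j are nonneg, sum is 0, but j1 term > 0
    have hkey : ∑ j : Fin J, (((j2 : ℤ) + 1) - ((j : ℤ) + 1)) * d j = 0 := by
      simp only [sub_mul, Finset.sum_sub_distrib, hdwsum, ← Finset.mul_sum, hdsum]
      ring
    have hnonneg : ∀ j ∈ (Finset.univ : Finset (Fin J)), 0 ≤ ((((j2:ℕ) : ℤ) + 1) - (((j:ℕ) : ℤ) + 1)) * d j := by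
      intro j _
      rcases lt_trichotomy j j2 with hjlt | heq | hjgt
      · have hc : (0:ℤ) ≤ (((j2:ℕ) : ℤ) + 1) - (((j:ℕ) : ℤ) + 1) := by
          have : (j : ℕ) < (j2 : ℕ) := hjlt
          omega
        have hdnn : 0 ≤ d j := by
          rcases lt_trichotomy j j1 with h1 | h1 | h1
          · have := hmin j h1; simp [hd, this]
          · subst h1; exact le_of_lt hdj1
          · have := hbetween j h1 hjlt; simp only [hd]; omega
        exact mul_nonneg hc hdnn
      · subst heq; simp
      · have hc : (((j2:ℕ) : ℤ) + 1) - (((j:ℕ) : ℤ) + 1) ≤ 0 := by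
          have : (j2 : ℕ) < (j : ℕ) := hjgt
          omega
        have hdnp : d j ≤ 0 := by
          have := h j hjgt; simp only [hd]; omega
        nlinarith
    have hz := (Finset.sum_eq_zero_iff_of_nonneg hnonneg).mp hkey j1 (Finset.mem_univ _)
    have hcpos : (0:ℤ) < ((j2 : ℤ) + 1) - ((j1 : ℤ) + 1) := by
      have : (j1 : ℕ) < (j2 : ℕ) := hj12
      omega
    nlinarith
end

section
/- Let z = (z_{ij}) ∈ ℤ^{2×J} be a nonzero array with Σ_{j=1}^J z_{1j} = 0, z_{1j} + z_{2j} = 0 for every j, and Σ_{j=1}^J j·z_{1j} = 0. Then there exist indices j1 < j2 and j3 < j4 in {1,…,J} satisfying: (a) z_{1j1} > 0, z_{1j2} < 0, z_{1j3} < 0, z_{1j4} > 0; (b) if z_{1j1} = 1 then j1 ≠ j4; (c) if z_{1j2} = −1 then j2 ≠ j3; (d) z_{1j} = 0 for all j with j1 < j < j2 and all j with j3 < j < j4. -/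
/-- Auxiliary: given partial sums `S` of `b` with `S 0 = S J = 0` and a maximizer
`m ≤ J` of `S` over `0..J` with `S m > 0`, there is a rise `p` into the maximal
plateau and a fall `q` out of it, with only zeros strictly between. -/
lemma plateau_aux (b S : ℕ → ℤ) (J m : ℕ) (hm : m ≤ J)
    (hSsucc : ∀ k, S (k + 1) = S k + b k)
    (hS0 : S 0 = 0) (hSJ : S J = 0)
    (hmax : ∀ k, k ≤ J → S k ≤ S m) (hSm : 0 < S m) :
    ∃ p q : ℕ, p < m ∧ m ≤ q ∧ q < J ∧ 0 < b p ∧ b q < 0 ∧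
      S (p + 1) = S m ∧ S q = S m ∧
      ∀ n, p < n → n < q → b n = 0 := by
  classical
  have hconst : ∀ i j : ℕ, i ≤ j → (∀ n, i ≤ n → n < j → b n = 0) → S j = S i := by
    intro i j
    induction j with
    | zero =>
      intro hij _
      obtain rfl : i = 0 := Nat.le_zero.1 hij
      rfl
    | succ j ih =>
      intro hij hz
      rcases Nat.lt_or_ge i (j + 1) with h | h
      · have hSj : S j = S i := ih (by omega) (fun n h1 h2 => hz n h1 (by omega))
        rw [hSsucc, hz j (by omega) (by omega), hSj]; ring
      · obtain rfl : i = j + 1 := by omega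
        rfl
  -- the rise p
  have hT1 : ((Finset.range m).filter fun n => b n ≠ 0).Nonempty := by
    by_contra h
    rw [Finset.not_nonempty_iff_eq_empty, Finset.filter_eq_empty_iff] at h
    have hc : S m = S 0 := hconst 0 m (Nat.zero_le m)
      (fun n _ h2 => not_not.1 (h (Finset.mem_range.2 h2)))
    rw [hS0] at hc
    omega
  set p := ((Finset.range m).filter fun n => b n ≠ 0).max' hT1 with hpdef
  have hpmem := Finset.max'_mem _ hT1
  rw [← hpdef] at hpmem
  have hpm : p < m := Finset.mem_range.1 (Finset.mem_filter.1 hpmem).1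
  have hbpne : b p ≠ 0 := (Finset.mem_filter.1 hpmem).2
  have hpz : ∀ n, p < n → n < m → b n = 0 := by
    intro n h1 h2
    by_contra hb
    have hle : n ≤ p := Finset.le_max' _ n (Finset.mem_filter.2 ⟨Finset.mem_range.2 h2, hb⟩)
    omega
  have hSp1 : S (p + 1) = S m :=
    (hconst (p + 1) m hpm (fun n h1 h2 => hpz n (by omega) h2)).symm
  have hbp : 0 < b p := by
    have h1 : S p ≤ S m := hmax p (by omega)
    have h2 : S (p + 1) = S p + b p := hSsucc p
    omega
  -- the fall q
  have hT2 : ((Finset.Ico m J).filter fun n => b n ≠ 0).Nonempty := by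
    by_contra h
    rw [Finset.not_nonempty_iff_eq_empty, Finset.filter_eq_empty_iff] at h
    have hc : S J = S m := hconst m J hm
      (fun n h1 h2 => not_not.1 (h (Finset.mem_Ico.2 ⟨h1, h2⟩)))
    rw [hSJ] at hc
    omega
  set q := ((Finset.Ico m J).filter fun n => b n ≠ 0).min' hT2 with hqdef
  have hqmem := Finset.min'_mem _ hT2
  rw [← hqdef] at hqmem
  have hmq : m ≤ q := (Finset.mem_Ico.1 (Finset.mem_filter.1 hqmem).1).1
  have hqJ : q < J := (Finset.mem_Ico.1 (Finset.mem_filter.1 hqmem).1).2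
  have hbqne : b q ≠ 0 := (Finset.mem_filter.1 hqmem).2
  have hqz : ∀ n, m ≤ n → n < q → b n = 0 := by
    intro n h1 h2
    by_contra hb
    have hle : q ≤ n := Finset.min'_le _ n
      (Finset.mem_filter.2 ⟨Finset.mem_Ico.2 ⟨h1, by omega⟩, hb⟩)
    omega
  have hSq : S q = S m := hconst m q hmq hqz
  have hbq : b q < 0 := by
    have h1 : S (q + 1) ≤ S m := hmax (q + 1) (by omega)
    have h2 : S (q + 1) = S q + b q := hSsucc q
    omega
  refine ⟨p, q, hpm, hmq, hqJ, hbp, hbq, hSp1, hSq, ?_⟩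
  intro n h1 h2
  rcases Nat.lt_or_ge n m with h | h
  · exact hpz n h1 h
  · exact hqz n h h2

/-- For any move z of the univariate logistic regression model
(nonzero z ∈ ℤ^{2×J} with Σ_j z_{1j} = 0, z_{1j} + z_{2j} = 0 for all j and
Σ_j j·z_{1j} = 0) there exist indices j1 < j2 and j3 < j4 with:
(a) z_{1j1} > 0, z_{1j2} < 0, z_{1j3} < 0, z_{1j4} > 0;
(b) z_{1j1} = 1 implies j1 ≠ j4; (c) z_{1j2} = −1 implies j2 ≠ j3;
(d) z_{1j} = 0 for j1 < j < j2 and for j3 < j < j4.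
Rows are indexed by `Fin 2` (row 1 is `0`), levels by `Fin J` with value
`(j : ℕ) + 1`. -/
theorem univariate_logistic_move_sign_pattern (J : ℕ) (hJ : 1 ≤ J)
    (z : Fin 2 → Fin J → ℤ) (hz : z ≠ 0)
    (hsum : ∑ j : Fin J, z 0 j = 0)
    (hcol : ∀ j : Fin J, z 0 j + z 1 j = 0)
    (hwsum : ∑ j : Fin J, (((j : ℕ) : ℤ) + 1) * z 0 j = 0) :
    ∃ j1 j2 j3 j4 : Fin J, j1 < j2 ∧ j3 < j4 ∧
      z 0 j1 > 0 ∧ z 0 j2 < 0 ∧ z 0 j3 < 0 ∧ z 0 j4 > 0 ∧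
      (z 0 j1 = 1 → j1 ≠ j4) ∧
      (z 0 j2 = -1 → j2 ≠ j3) ∧
      (∀ j : Fin J, j1 < j → j < j2 → z 0 j = 0) ∧
      (∀ j : Fin J, j3 < j → j < j4 → z 0 j = 0) := by
  classical
  set b : ℕ → ℤ := fun n => if h : n < J then z 0 ⟨n, h⟩ else 0 with hbdef
  have hbf : ∀ j : Fin J, b j.val = z 0 j := by
    intro j
    simp [hbdef, j.isLt]
  set S : ℕ → ℤ := fun k => ∑ n ∈ Finset.range k, b n with hSdef
  have hSsucc : ∀ k, S (k + 1) = S k + b k := by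
    intro k
    simp [hSdef, Finset.sum_range_succ]
  have hS0 : S 0 = 0 := by simp [hSdef]
  have hSJ : S J = 0 := by
    have h1 : S J = ∑ j : Fin J, b j.val := (Fin.sum_univ_eq_sum_range b J).symm
    rw [h1, Finset.sum_congr rfl fun j _ => hbf j]
    exact hsum
  have hW : ∑ n ∈ Finset.range J, ((n : ℤ) + 1) * b n = 0 := by
    rw [← Fin.sum_univ_eq_sum_range (fun n => ((n : ℤ) + 1) * b n) J]
    rw [Finset.sum_congr rfl fun j _ => by rw [hbf j]]
    exact hwsum
  have key : ∀ N, ∑ k ∈ Finset.range N, S k + ∑ n ∈ Finset.range N, ((n : ℤ) + 1) * b n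
      = N * S N := by
    intro N
    induction N with
    | zero => simp
    | succ N ih =>
      rw [Finset.sum_range_succ, Finset.sum_range_succ, hSsucc]
      push_cast
      linear_combination ih
  have hSsum : ∑ k ∈ Finset.range J, S k = 0 := by
    have h := key J
    rw [hW, hSJ] at h
    simpa using h
  -- b is not identically zero
  have hbne : ∃ n, b n ≠ 0 := by
    by_contra h
    push_neg at h
    apply hz
    funext i j
    have h0 : z 0 j = 0 := by rw [← hbf j]; exact h j.val
    have h1 : z 1 j = 0 := by have := hcol j; linarith
    fin_cases i
    · simpa using h0
    · simpa using h1
  -- some partial sum is nonzero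
  have hSne : ∃ k, k < J ∧ S k ≠ 0 := by
    obtain ⟨n, hn⟩ := hbne
    have hnJ : n < J := by
      by_contra hnJ
      exact hn (by simp only [hbdef]; rw [dif_neg hnJ])
    have e1 := hSsucc n
    by_contra h
    push_neg at h
    rcases Nat.lt_or_ge (n + 1) J with h' | h'
    · rw [h n hnJ, h (n + 1) h'] at e1
      exact hn (by linarith)
    · have hEq : n + 1 = J := by omega
      rw [hEq, hSJ, h n hnJ] at e1
      exact hn (by linarith)
  have hpos : ∃ k, k < J ∧ 0 < S k := by
    by_contra h
    push_neg at h
    obtain ⟨k, hk, hkne⟩ := hSne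
    exact hkne ((Finset.sum_eq_zero_iff_of_nonpos
      (fun i hi => h i (Finset.mem_range.1 hi))).1 hSsum k (Finset.mem_range.2 hk))
  have hneg : ∃ k, k < J ∧ S k < 0 := by
    by_contra h
    push_neg at h
    obtain ⟨k, hk, hkne⟩ := hSne
    exact hkne ((Finset.sum_eq_zero_iff_of_nonneg
      (fun i hi => h i (Finset.mem_range.1 hi))).1 hSsum k (Finset.mem_range.2 hk))
  obtain ⟨m, hmF, hmax⟩ := Finset.exists_max_image (Finset.range (J + 1)) S ⟨0, by simp⟩
  obtain ⟨m', hm'F, hmin⟩ := Finset.exists_min_image (Finset.range (J + 1)) S ⟨0, by simp⟩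
  have hmJ : m ≤ J := by
    have := Finset.mem_range.1 hmF; omega
  have hm'J : m' ≤ J := by
    have := Finset.mem_range.1 hm'F; omega
  have hmax' : ∀ k, k ≤ J → S k ≤ S m :=
    fun k hk => hmax k (Finset.mem_range.2 (Nat.lt_succ_of_le hk))
  have hmin' : ∀ k, k ≤ J → S m' ≤ S k :=
    fun k hk => hmin k (Finset.mem_range.2 (Nat.lt_succ_of_le hk))
  obtain ⟨kp, hkpJ, hkp⟩ := hpos
  obtain ⟨kn, hknJ, hkn⟩ := hneg
  have hSm : 1 ≤ S m := by have := hmax' kp (le_of_lt hkpJ); omega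
  have hSm' : S m' ≤ -1 := by have := hmin' kn (le_of_lt hknJ); omega
  -- max side: j1, j2
  obtain ⟨p1, q1, hp1m, hmq1, hq1J, hb1, hb2, hE1, hE2, hbet1⟩ :=
    plateau_aux b S J m hmJ hSsucc hS0 hSJ hmax' (by omega)
  -- min side: j3, j4 (apply to the negated sequence)
  obtain ⟨p2, q2, hp2m, hmq2, hq2J, hb3, hb4, hE3, hE4, hbet2⟩ :=
    plateau_aux (fun n => -b n) (fun k => -S k) J m' hm'J
      (fun k => by show -S (k + 1) = -S k + -b k; rw [hSsucc k]; ring)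
      (by simp [hS0]) (by simp [hSJ])
      (fun k hk => by simpa using hmin' k hk) (by simp; omega)
  have hp1J : p1 < J := by omega
  have hp2J : p2 < J := by omega
  refine ⟨⟨p1, hp1J⟩, ⟨q1, hq1J⟩, ⟨p2, hp2J⟩, ⟨q2, hq2J⟩, ?_, ?_, ?_, ?_, ?_, ?_, ?_, ?_, ?_, ?_⟩
  · exact Fin.mk_lt_mk.2 (by omega)
  · exact Fin.mk_lt_mk.2 (by omega)
  · have h : b p1 = z 0 ⟨p1, hp1J⟩ := hbf ⟨p1, hp1J⟩
    omega
  · have h : b q1 = z 0 ⟨q1, hq1J⟩ := hbf ⟨q1, hq1J⟩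
    omega
  · have h : b p2 = z 0 ⟨p2, hp2J⟩ := hbf ⟨p2, hp2J⟩
    have hb3' : 0 < -b p2 := hb3
    omega
  · have h : b q2 = z 0 ⟨q2, hq2J⟩ := hbf ⟨q2, hq2J⟩
    have hb4' : -b q2 < 0 := hb4
    omega
  · -- (b): z 0 j1 = 1 → j1 ≠ j4
    intro h1 heq
    have hpq : p1 = q2 := by
      simpa [Fin.mk.injEq] using heq
    have hv : b p1 = z 0 ⟨p1, hp1J⟩ := hbf ⟨p1, hp1J⟩
    have e1 : S (p1 + 1) = S p1 + b p1 := hSsucc p1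
    have e2' : -S q2 = -S m' := hE4
    have e2 : S q2 = S m' := by omega
    rw [← hpq] at e2
    omega
  · -- (c): z 0 j2 = -1 → j2 ≠ j3
    intro h2 heq
    have hpq : q1 = p2 := by
      simpa [Fin.mk.injEq] using heq
    have hv : b q1 = z 0 ⟨q1, hq1J⟩ := hbf ⟨q1, hq1J⟩
    have e1 : S (q1 + 1) = S q1 + b q1 := hSsucc q1
    have e2' : -S (p2 + 1) = -S m' := hE3
    have e2 : S (p2 + 1) = S m' := by omega
    rw [← hpq] at e2
    omega
  · intro j hja hjb
    rw [Fin.lt_def] at hja hjb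
    simp only at hja hjb
    rw [← hbf j]
    exact hbet1 j.val hja hjb
  · intro j hja hjb
    rw [Fin.lt_def] at hja hjb
    simp only at hja hjb
    rw [← hbf j]
    have h2 : -b j.val = 0 := hbet2 j.val hja hjb
    omega
end

section
/- Let x, y ∈ ℕ^{2×J} be two distinct tables in the same fiber of the univariate logistic regression model with x_{+j} = y_{+j} > 0 for all j. Then there exists z ∈ B_Λ such that either x + z ∈ ℕ^{2×J} and ‖(x + z) − y‖₁ < ‖x − y‖₁, or y + z ∈ ℕ^{2×J} and ‖x − (y + z)‖₁ < ‖x − y‖₁; that is, B_Λ is norm-reducing on all fibers with positive column sums. -/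
/-- E_j ∈ ℤ^{2×J}: +1 at entry (1,j), −1 at entry (2,j), 0 elsewhere. -/
def LogisE (J : ℕ) (j : Fin J) : Fin 2 → Fin J → ℤ :=
  fun i j' => if j' = j then (if i = 0 then 1 else -1) else 0

/-- B_Λ = { ±(E_{j1} + E_{j4} − E_{j2} − E_{j3}) :
1 ≤ j1 < j2 ≤ j3 < j4 ≤ J, j2 − j1 = j4 − j3 }. -/
def LogisBLambda (J : ℕ) : Set (Fin 2 → Fin J → ℤ) :=
  {z | ∃ j1 j2 j3 j4 : Fin J,
    j1 < j2 ∧ j2 ≤ j3 ∧ j3 < j4 ∧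
    (j2 : ℕ) - (j1 : ℕ) = (j4 : ℕ) - (j3 : ℕ) ∧
    (z = LogisE J j1 + LogisE J j4 - LogisE J j2 - LogisE J j3 ∨
     z = -(LogisE J j1 + LogisE J j4 - LogisE J j2 - LogisE J j3))}


lemma comb_aux (J : ℕ) (D : ℕ → ℤ) (hD0 : ∀ n, J ≤ n → D n = 0)
    (hs : ∑ n ∈ Finset.range J, D n = 0)
    (hm : ∑ n ∈ Finset.range J, (n : ℤ) * D n = 0)
    (a : ℕ) (ha : D a < 0) (hamin : ∀ m, m < a → D m = 0) :
    ∃ p q r s : ℕ, p < q ∧ q ≤ r ∧ r < s ∧ s < J ∧ p + s = q + r ∧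
      1 ≤ D q ∧ 1 ≤ D r ∧ (q = r → 2 ≤ D q) ∧ D p ≤ 0 ∧ D s ≤ 0 ∧
      (D p < 0 ∨ D s < 0) := by
  set S : ℕ → ℤ := fun k => ∑ n ∈ Finset.range k, D n with hSdef
  have haJ : a < J := by
    by_contra h
    push_neg at h
    have := hD0 a h
    omega
  have hSa : S (a + 1) = D a := by
    rw [hSdef]
    simp only
    rw [Finset.sum_range_succ, Finset.sum_eq_zero (fun n hn => hamin n (Finset.mem_range.mp hn))]
    ring
  have hid : ∀ m, ∑ k ∈ Finset.range m, S k
      = ((m : ℤ) - 1) * S m - ∑ n ∈ Finset.range m, (n : ℤ) * D n := by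
    intro m
    induction m with
    | zero => simp [hSdef]
    | succ m ih =>
      have hS1 : S (m + 1) = S m + D m := Finset.sum_range_succ D m
      rw [Finset.sum_range_succ, ih, Finset.sum_range_succ (f := fun n => (n : ℤ) * D n), hS1]
      push_cast
      ring
  have hsum0 : ∑ k ∈ Finset.range J, S k = 0 := by
    rw [hid J]
    have hSJ : S J = 0 := hs
    rw [hSJ, hm]
    ring
  have haJ1 : a + 1 < J := by
    by_contra h
    push_neg at h
    have : a + 1 = J := by omega
    rw [this] at hSa
    have hSJ : S J = 0 := hs
    omega
  have hexK : ∃ k, 0 < S k := by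
    by_contra h
    push_neg at h
    have hlt : ∑ k ∈ Finset.range J, S k < ∑ k ∈ Finset.range J, (fun _ => (0:ℤ)) k := by
      refine Finset.sum_lt_sum (fun i _ => h i) ⟨a + 1, Finset.mem_range.mpr haJ1, ?_⟩
      exact show S (a+1) < 0 by omega
    simp only [Finset.sum_const_zero] at hlt
    omega
  obtain ⟨K, hK⟩ := hexK
  have hKa : a + 1 < K := by
    by_contra h
    push_neg at h
    rcases Nat.lt_or_ge K (a + 1) with h1 | h1
    · have : S K = 0 := Finset.sum_eq_zero (fun n hn => hamin n (by
        have := Finset.mem_range.mp hn; omega))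
      omega
    · have : K = a + 1 := by omega
      rw [this] at hK
      omega
  have hKJ : K ≤ J := by
    by_contra h
    push_neg at h
    have h1 : S J + ∑ n ∈ Finset.Ico J K, D n = S K :=
      Finset.sum_range_add_sum_Ico D (le_of_lt h)
    have h2 : ∑ n ∈ Finset.Ico J K, D n = 0 :=
      Finset.sum_eq_zero (fun n hn => hD0 n (Finset.mem_Ico.mp hn).1)
    have hSJ : S J = 0 := hs
    omega
  have huex : ∃ n, K ≤ n ∧ D n < 0 := by
    have h1 : S K + ∑ n ∈ Finset.Ico K J, D n = S J :=
      Finset.sum_range_add_sum_Ico D hKJ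
    have hSJ : S J = 0 := hs
    by_contra h
    push_neg at h
    have h2 : 0 ≤ ∑ n ∈ Finset.Ico K J, D n :=
      Finset.sum_nonneg (fun n hn => h n (Finset.mem_Ico.mp hn).1)
    omega
  set u := Nat.find huex with hudef
  obtain ⟨hKu, hDu⟩ : K ≤ u ∧ D u < 0 := Nat.find_spec huex
  have huJ : u < J := by
    by_contra h
    push_neg at h
    have := hD0 u h
    omega
  have hαex : ∃ n, 0 < D n := by
    by_contra h
    push_neg at h
    have : S K ≤ 0 := Finset.sum_nonpos (fun n _ => h n)
    omega
  set α := Nat.find hαex with hαdef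
  have hDα : 0 < D α := Nat.find_spec hαex
  have hαmin : ∀ m, m < α → D m ≤ 0 := fun m hm => le_of_not_gt (Nat.find_min hαex hm)
  have hαK : α < K := by
    by_contra h
    push_neg at h
    have : S K ≤ 0 := Finset.sum_nonpos (fun n hn => hαmin n (by
      have := Finset.mem_range.mp hn; omega))
    omega
  have haα : a < α := by
    rcases Nat.lt_trichotomy a α with h | h | h
    · exact h
    · rw [h] at ha; omega
    · have := hamin α h; omega
  have hαu1 : α ≤ u - 1 := by omega
  set rst := Nat.findGreatest (fun w => 0 < D w) (u - 1) with hrdef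
  have hr_pos : 0 < D rst := Nat.findGreatest_spec (P := fun w => 0 < D w) hαu1 hDα
  have hr_ge : α ≤ rst := Nat.le_findGreatest (P := fun w => 0 < D w) hαu1 hDα
  have hr_le : rst ≤ u - 1 := Nat.findGreatest_le _
  have hr_gr : ∀ w, rst < w → w ≤ u - 1 → D w ≤ 0 := fun w h1 h2 =>
    le_of_not_gt (Nat.findGreatest_is_greatest (P := fun w => 0 < D w) h1 h2)
  have hru : rst < u := by omega
  have hmult : α = rst → 2 ≤ D α := by
    intro he
    have h1 : ∀ n, n < K → n ≠ α → n ≠ a → D n ≤ 0 := by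
      intro n h2 h3 h4
      by_contra h5
      push_neg at h5
      have hαn : α ≤ n := Nat.find_min' hαex h5
      have hn1 : n ≤ u - 1 := by omega
      rcases Nat.lt_or_ge rst n with h6 | h6
      · exact absurd (hr_gr n h6 hn1) (by omega)
      · omega
    have hαmem : α ∈ Finset.range K := Finset.mem_range.mpr hαK
    have hamem : a ∈ (Finset.range K).erase α := by
      rw [Finset.mem_erase]
      exact ⟨by omega, Finset.mem_range.mpr (by omega)⟩
    have e1 : D α + ∑ n ∈ (Finset.range K).erase α, D n = S K :=
      Finset.add_sum_erase _ D hαmem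
    have e2 : D a + ∑ n ∈ ((Finset.range K).erase α).erase a, D n
        = ∑ n ∈ (Finset.range K).erase α, D n :=
      Finset.add_sum_erase _ D hamem
    have e3 : ∑ n ∈ ((Finset.range K).erase α).erase a, D n ≤ 0 := by
      refine Finset.sum_nonpos (fun n hn => ?_)
      rw [Finset.mem_erase, Finset.mem_erase, Finset.mem_range] at hn
      exact h1 n hn.2.2 hn.2.1 hn.1
    omega
  rcases le_or_gt u (α + rst) with hcase | hcase
  · refine ⟨α + rst - u, α, rst, u, by omega, hr_ge, hru, huJ, by omega, by omega, by omega,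
      hmult, hαmin _ (by omega), le_of_lt hDu, Or.inr hDu⟩
  · refine ⟨a, α, rst, rst + α - a, haα, hr_ge, by omega, by omega, by omega, by omega, by omega,
      hmult, le_of_lt ha, hr_gr _ (by omega) (by omega), Or.inl ha⟩

lemma comb (J : ℕ) (D : ℕ → ℤ) (hD0 : ∀ n, J ≤ n → D n = 0)
    (hne : ∃ n, D n ≠ 0)
    (hs : ∑ n ∈ Finset.range J, D n = 0)
    (hm : ∑ n ∈ Finset.range J, (n : ℤ) * D n = 0) :
    ∃ p q r s : ℕ, p < q ∧ q ≤ r ∧ r < s ∧ s < J ∧ p + s = q + r ∧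
      ((1 ≤ D q ∧ 1 ≤ D r ∧ (q = r → 2 ≤ D q) ∧ D p ≤ 0 ∧ D s ≤ 0 ∧
        (D p < 0 ∨ D s < 0)) ∨
       (D q ≤ -1 ∧ D r ≤ -1 ∧ (q = r → D q ≤ -2) ∧ 0 ≤ D p ∧ 0 ≤ D s ∧
        (0 < D p ∨ 0 < D s))) := by
  set a := Nat.find hne with hadef
  have hDa : D a ≠ 0 := Nat.find_spec hne
  have hamin : ∀ m, m < a → D m = 0 := fun m hm => by
    have := Nat.find_min hne hm
    simpa using this
  rcases lt_or_gt_of_ne hDa with h | h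
  · obtain ⟨p, q, r, s, h1, h2, h3, h4, h5, h6⟩ := comb_aux J D hD0 hs hm a h hamin
    exact ⟨p, q, r, s, h1, h2, h3, h4, h5, Or.inl h6⟩
  · have hD0' : ∀ n, J ≤ n → -D n = 0 := fun n hn => by rw [hD0 n hn]; ring
    have hs' : ∑ n ∈ Finset.range J, -D n = 0 := by
      rw [Finset.sum_neg_distrib, hs]; ring
    have hm' : ∑ n ∈ Finset.range J, (n : ℤ) * -D n = 0 := by
      have : ∀ n ∈ Finset.range J, (n : ℤ) * -D n = -((n:ℤ) * D n) := fun n _ => by ring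
      rw [Finset.sum_congr rfl this, Finset.sum_neg_distrib, hm]; ring
    obtain ⟨p, q, r, s, h1, h2, h3, h4, h5, h6⟩ :=
      comb_aux J (fun n => -D n) hD0' hs' hm' a (show -D a < 0 by omega) (fun m hm =>
        show -D m = 0 by rw [hamin m hm]; ring)
    refine ⟨p, q, r, s, h1, h2, h3, h4, h5, Or.inr ?_⟩
    obtain ⟨c1, c2, c3, c4, c5, c6⟩ := h6
    have c1' : (1:ℤ) ≤ -D q := c1
    have c2' : (1:ℤ) ≤ -D r := c2
    have c4' : -D p ≤ 0 := c4
    have c5' : -D s ≤ 0 := c5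
    have c6' : -D p < 0 ∨ -D s < 0 := c6
    refine ⟨by omega, by omega, fun he => ?_, by omega, by omega, by omega⟩
    have c3' : (2:ℤ) ≤ -D q := c3 he
    omega

lemma habsm1 {t : ℤ} (ht : 1 ≤ t) : |t + -1| = |t| - 1 := by
  rw [abs_of_nonneg (by omega), abs_of_nonneg (by omega)]
  ring

lemma habsm2 {t : ℤ} (ht : 2 ≤ t) : |t + -2| = |t| - 2 := by
  rw [abs_of_nonneg (by omega), abs_of_nonneg (by omega)]
  ring

lemma habsp1 {t : ℤ} (ht : t < 0) : |t + 1| = |t| - 1 := by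
  rw [abs_of_nonpos (by omega), abs_of_nonpos (by omega)]; ring

lemma habsp1' {t : ℤ} (ht : t ≤ 0) : |t + 1| ≤ |t| + 1 := by
  have := abs_add_le t 1
  simpa using this

lemma key (J : ℕ) (x y : Fin 2 → Fin J → ℕ)
    (hcol : ∀ j, x 0 j + x 1 j = y 0 j + y 1 j)
    (hpos : ∀ j, 0 < x 0 j + x 1 j)
    (P Q R S : Fin J) (hPQ : (P : ℕ) < Q) (hQR : (Q : ℕ) ≤ R) (hRS : (R : ℕ) < S)
    (hgap : (P : ℕ) + (S : ℕ) = (Q : ℕ) + (R : ℕ))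
    (hdQ : 1 ≤ (x 0 Q : ℤ) - y 0 Q)
    (hdR : 1 ≤ (x 0 R : ℤ) - y 0 R)
    (hdQR : Q = R → 2 ≤ (x 0 Q : ℤ) - y 0 Q)
    (hdP : (x 0 P : ℤ) - y 0 P ≤ 0)
    (hdS : (x 0 S : ℤ) - y 0 S ≤ 0)
    (hstrict : (x 0 P : ℤ) - y 0 P < 0 ∨ (x 0 S : ℤ) - y 0 S < 0) :
    ∃ z ∈ LogisBLambda J,
      ((∀ i j, 0 ≤ (x i j : ℤ) + z i j) ∧
        (∑ i : Fin 2, ∑ j : Fin J, |((x i j : ℤ) + z i j) - (y i j : ℤ)|)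
          < ∑ i : Fin 2, ∑ j : Fin J, |(x i j : ℤ) - (y i j : ℤ)|) ∨
      ((∀ i j, 0 ≤ (y i j : ℤ) + z i j) ∧
        (∑ i : Fin 2, ∑ j : Fin J, |(x i j : ℤ) - ((y i j : ℤ) + z i j)|)
          < ∑ i : Fin 2, ∑ j : Fin J, |(x i j : ℤ) - (y i j : ℤ)|) := by
  -- ne facts
  have hPQn : P ≠ Q := Fin.ne_of_val_ne (by omega)
  have hPRn : P ≠ R := Fin.ne_of_val_ne (by omega)
  have hPSn : P ≠ S := Fin.ne_of_val_ne (by omega)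
  have hQPn : Q ≠ P := Fin.ne_of_val_ne (by omega)
  have hQSn : Q ≠ S := Fin.ne_of_val_ne (by omega)
  have hRPn : R ≠ P := Fin.ne_of_val_ne (by omega)
  have hRSn : R ≠ S := Fin.ne_of_val_ne (by omega)
  have hSPn : S ≠ P := Fin.ne_of_val_ne (by omega)
  have hSQn : S ≠ Q := Fin.ne_of_val_ne (by omega)
  have hSRn : S ≠ R := Fin.ne_of_val_ne (by omega)
  set d : Fin J → ℤ := fun j => (x 0 j : ℤ) - y 0 j with hd
  have hdj : ∀ j, d j = (x 0 j : ℤ) - y 0 j := fun j => rfl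
  set v : Fin J → ℤ := fun j =>
    (if j = P then 1 else 0) + (if j = S then 1 else 0)
      - (if j = Q then 1 else 0) - (if j = R then 1 else 0) with hv
  set z₀ : Fin 2 → Fin J → ℤ :=
    LogisE J P + LogisE J S - LogisE J Q - LogisE J R with hz₀
  have hz0 : ∀ j, z₀ 0 j = v j := by
    intro j
    simp [hz₀, hv, LogisE, Pi.add_apply, Pi.sub_apply]
  have hz1 : ∀ j, z₀ 1 j = -v j := by
    intro j
    simp only [hz₀, hv, LogisE, Pi.add_apply, Pi.sub_apply]
    norm_num
    split_ifs <;> ring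
  have hvP : v P = 1 := by simp [hv, hPQn, hPRn, hPSn]
  have hvS : v S = 1 := by simp [hv, hSPn, hSQn, hSRn]
  have hvQ : v Q = (if Q = R then -2 else -1) := by
    by_cases h : Q = R
    · simp [hv, hQPn, hQSn, hRPn, hRSn, h]
    · simp [hv, hQPn, hQSn, h]
  have hvR : v R = (if Q = R then -2 else -1) := by
    by_cases h : Q = R
    · simp [hv, ← h, hQPn, hQSn]
    · simp [hv, hRPn, hRSn, Ne.symm h, h]
  have hv0 : ∀ j, j ≠ P → j ≠ Q → j ≠ R → j ≠ S → v j = 0 := by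
    intro j h1 h2 h3 h4
    simp [hv, h1, h2, h3, h4]
  have hc : ∀ j, (x 0 j : ℤ) + x 1 j = (y 0 j : ℤ) + y 1 j := by
    intro j; exact_mod_cast hcol j
  have hp : ∀ j, 1 ≤ (x 0 j : ℤ) + x 1 j := by
    intro j; exact_mod_cast hpos j
  -- the key sum inequality on |d + v| vs |d|
  have habs_lt : (∑ j : Fin J, |d j + v j|) < ∑ j : Fin J, |d j| := by
    have hsub : ∑ j : Fin J, (|d j + v j| - |d j|)
        = (∑ j : Fin J, |d j + v j|) - ∑ j : Fin J, |d j| := Finset.sum_sub_distrib _ _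
    have hTg : ∑ j ∈ ({P, Q, R, S} : Finset (Fin J)), (|d j + v j| - |d j|)
        = ∑ j : Fin J, (|d j + v j| - |d j|) := by
      refine Finset.sum_subset (Finset.subset_univ _) ?_
      intro j _ hj
      simp only [Finset.mem_insert, Finset.mem_singleton] at hj
      push_neg at hj
      rw [hv0 j hj.1 hj.2.1 hj.2.2.1 hj.2.2.2, add_zero, sub_self]
    have hTneg : ∑ j ∈ ({P, Q, R, S} : Finset (Fin J)), (|d j + v j| - |d j|) < 0 := by
      rcases eq_or_ne Q R with hqr | hqr
      · subst hqr
        rw [show ({P, Q, Q, S} : Finset (Fin J)) = {P, Q, S} by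
          rw [Finset.insert_idem]]
        rw [Finset.sum_insert (by simp [hPQn, hPSn]),
          Finset.sum_insert (by simp [hQSn]), Finset.sum_singleton]
        rw [hvP, hvS, hvQ, if_pos rfl]
        have h2 : 2 ≤ d Q := hdQR rfl
        rw [habsm2 h2]
        rcases hstrict with h | h
        · rw [habsp1 h]
          have := habsp1' hdS
          linarith
        · rw [habsp1 h]
          have := habsp1' hdP
          linarith
      · rw [Finset.sum_insert (by simp [hPQn, hPRn, hPSn]),
          Finset.sum_insert (by simp [hqr, hQSn]),
          Finset.sum_insert (by simp [hRSn]), Finset.sum_singleton]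
        rw [hvP, hvS, hvQ, if_neg hqr, hvR, if_neg hqr]
        rw [habsm1 hdQ, habsm1 hdR]
        rcases hstrict with h | h
        · rw [habsp1 h]
          have := habsp1' hdS
          linarith
        · rw [habsp1 h]
          have := habsp1' hdP
          linarith
    rw [hTg, hsub] at hTneg
    linarith
  -- row rewrites for x-side
  have e1 : ∑ j : Fin J, |((x 0 j : ℤ) + z₀ 0 j) - y 0 j| = ∑ j : Fin J, |d j + v j| := by
    refine Finset.sum_congr rfl (fun j _ => ?_)
    rw [hz0 j]
    congr 1
    have := hdj j
    omega
  have e2 : ∑ j : Fin J, |((x 1 j : ℤ) + z₀ 1 j) - y 1 j| = ∑ j : Fin J, |d j + v j| := by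
    refine Finset.sum_congr rfl (fun j _ => ?_)
    rw [hz1 j]
    have h1 := hc j
    have h2 := hdj j
    have h3 : ((x 1 j : ℤ) + -v j) - y 1 j = -(d j + v j) := by omega
    rw [h3, abs_neg]
  have e3 : ∑ j : Fin J, |(x 0 j : ℤ) - y 0 j| = ∑ j : Fin J, |d j| := by
    refine Finset.sum_congr rfl (fun j _ => ?_)
    rw [hdj j]
  have e4 : ∑ j : Fin J, |(x 1 j : ℤ) - y 1 j| = ∑ j : Fin J, |d j| := by
    refine Finset.sum_congr rfl (fun j _ => ?_)
    have h1 := hc j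
    have h2 := hdj j
    have h3 : ((x 1 j : ℤ)) - y 1 j = -(d j) := by omega
    rw [h3, abs_neg]
  by_cases hside : 1 ≤ x 1 P ∧ 1 ≤ x 1 S
  · -- apply move to x
    refine ⟨z₀, ⟨P, Q, R, S, hPQ, hQR, hRS, by omega, Or.inl rfl⟩, Or.inl ⟨?_, ?_⟩⟩
    · intro i j
      have hnn0 : 0 ≤ (x 0 j : ℤ) + z₀ 0 j := by
        rw [hz0 j]
        rcases eq_or_ne j P with rfl | hjP
        · rw [hvP]; omega
        · rcases eq_or_ne j S with rfl | hjS
          · rw [hvS]; omega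
          · rcases eq_or_ne j Q with rfl | hjQ
            · rw [hvQ]
              split_ifs with h
              · have := hdQR h; omega
              · omega
            · rcases eq_or_ne j R with rfl | hjR
              · rw [hvR]
                split_ifs with h
                · have := hdQR h
                  rw [← h]
                  omega
                · omega
              · rw [hv0 j hjP hjQ hjR hjS]; omega
      have hnn1 : 0 ≤ (x 1 j : ℤ) + z₀ 1 j := by
        rw [hz1 j]
        obtain ⟨hxp, hxs⟩ := hside
        rcases eq_or_ne j P with rfl | hjP
        · rw [hvP]; omega
        · rcases eq_or_ne j S with rfl | hjS
          · rw [hvS]; omega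
          · rcases eq_or_ne j Q with rfl | hjQ
            · rw [hvQ]; split_ifs <;> omega
            · rcases eq_or_ne j R with rfl | hjR
              · rw [hvR]; split_ifs <;> omega
              · rw [hv0 j hjP hjQ hjR hjS]; omega
      fin_cases i
      · exact hnn0
      · exact hnn1
    · rw [Fin.sum_univ_two, Fin.sum_univ_two, e1, e2, e3, e4]
      linarith
  · -- apply move to y, with z' = -z₀
    have hyP : 1 ≤ (y 0 P : ℤ) ∧ 1 ≤ (y 0 S : ℤ) := by
      have h10 : x 1 P = 0 ∨ x 1 S = 0 := by
        by_contra hcon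
        push_neg at hcon
        exact hside ⟨by omega, by omega⟩
      have hcP := hc P; have hcS := hc S
      have hpP := hp P; have hpS := hp S
      rcases h10 with h0 | h0 <;> rcases hstrict with hst | hst <;>
        constructor <;> omega
    have hy1Q : 1 ≤ (y 1 Q : ℤ) := by have := hc Q; omega
    have hy1R : 1 ≤ (y 1 R : ℤ) := by have := hc R; omega
    have hy1Q2 : Q = R → 2 ≤ (y 1 Q : ℤ) := by
      intro h; have := hdQR h; have := hc Q; omega
    refine ⟨-z₀, ⟨P, Q, R, S, hPQ, hQR, hRS, by omega, Or.inr rfl⟩, Or.inr ⟨?_, ?_⟩⟩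
    · intro i j
      have hz0' : (-z₀) 0 j = -v j := by rw [Pi.neg_apply, Pi.neg_apply, hz0 j]
      have hz1' : (-z₀) 1 j = v j := by rw [Pi.neg_apply, Pi.neg_apply, hz1 j]; ring
      have hnn0 : 0 ≤ (y 0 j : ℤ) + (-z₀) 0 j := by
        rw [hz0']
        rcases eq_or_ne j P with rfl | hjP
        · rw [hvP]; omega
        · rcases eq_or_ne j S with rfl | hjS
          · rw [hvS]; omega
          · rcases eq_or_ne j Q with rfl | hjQ
            · rw [hvQ]; split_ifs <;> omega
            · rcases eq_or_ne j R with rfl | hjR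
              · rw [hvR]; split_ifs <;> omega
              · rw [hv0 j hjP hjQ hjR hjS]; omega
      have hnn1 : 0 ≤ (y 1 j : ℤ) + (-z₀) 1 j := by
        rw [hz1']
        rcases eq_or_ne j P with rfl | hjP
        · rw [hvP]; omega
        · rcases eq_or_ne j S with rfl | hjS
          · rw [hvS]; omega
          · rcases eq_or_ne j Q with rfl | hjQ
            · rw [hvQ]
              split_ifs with h
              · have := hy1Q2 h; omega
              · omega
            · rcases eq_or_ne j R with rfl | hjR
              · rw [hvR]
                split_ifs with h
                · have := hy1Q2 h
                  rw [← h]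
                  omega
                · omega
              · rw [hv0 j hjP hjQ hjR hjS]; omega
      fin_cases i
      · exact hnn0
      · exact hnn1
    · have e1' : ∑ j : Fin J, |(x 0 j : ℤ) - ((y 0 j : ℤ) + (-z₀) 0 j)|
          = ∑ j : Fin J, |d j + v j| := by
        refine Finset.sum_congr rfl (fun j _ => ?_)
        have hz0' : (-z₀) 0 j = -v j := by rw [Pi.neg_apply, Pi.neg_apply, hz0 j]
        rw [hz0']
        congr 1
        have := hdj j
        omega
      have e2' : ∑ j : Fin J, |(x 1 j : ℤ) - ((y 1 j : ℤ) + (-z₀) 1 j)|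
          = ∑ j : Fin J, |d j + v j| := by
        refine Finset.sum_congr rfl (fun j _ => ?_)
        have hz1' : (-z₀) 1 j = v j := by rw [Pi.neg_apply, Pi.neg_apply, hz1 j]; ring
        rw [hz1']
        have h1 := hc j
        have h2 := hdj j
        have h3 : (x 1 j : ℤ) - ((y 1 j : ℤ) + v j) = -(d j + v j) := by omega
        rw [h3, abs_neg]
      rw [Fin.sum_univ_two, Fin.sum_univ_two, e1', e2', e3, e4]
      linarith

/-- B_Λ is norm-reducing on all fibers of the univariate
logistic regression model with positive column sums: for distinct tables
x, y in the same fiber with x_{+j} = y_{+j} > 0 for all j, some z ∈ B_Λ can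
be added to x or to y, strictly reducing the L₁ distance. -/
theorem norm_reducing_univariate_logistic (J : ℕ) (hJ : 1 ≤ J)
    (x y : Fin 2 → Fin J → ℕ) (hxy : x ≠ y)
    (hsum : ∑ j : Fin J, x 0 j = ∑ j : Fin J, y 0 j)
    (hcol : ∀ j : Fin J, x 0 j + x 1 j = y 0 j + y 1 j)
    (hpos : ∀ j : Fin J, 0 < x 0 j + x 1 j)
    (hwsum : ∑ j : Fin J, ((j : ℕ) + 1) * x 0 j
           = ∑ j : Fin J, ((j : ℕ) + 1) * y 0 j) :
    ∃ z ∈ LogisBLambda J,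
      ((∀ i j, 0 ≤ (x i j : ℤ) + z i j) ∧
        (∑ i : Fin 2, ∑ j : Fin J, |((x i j : ℤ) + z i j) - (y i j : ℤ)|)
          < ∑ i : Fin 2, ∑ j : Fin J, |(x i j : ℤ) - (y i j : ℤ)|) ∨
      ((∀ i j, 0 ≤ (y i j : ℤ) + z i j) ∧
        (∑ i : Fin 2, ∑ j : Fin J, |(x i j : ℤ) - ((y i j : ℤ) + z i j)|)
          < ∑ i : Fin 2, ∑ j : Fin J, |(x i j : ℤ) - (y i j : ℤ)|) := by
  set d : Fin J → ℤ := fun j => (x 0 j : ℤ) - y 0 j with hd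
  have hdj : ∀ j, d j = (x 0 j : ℤ) - y 0 j := fun _ => rfl
  have hsZ : ∑ j : Fin J, d j = 0 := by
    have h1 : (∑ j : Fin J, (x 0 j : ℤ)) = ∑ j : Fin J, (y 0 j : ℤ) := by
      exact_mod_cast hsum
    have h2 : ∑ j : Fin J, d j
        = (∑ j : Fin J, (x 0 j : ℤ)) - ∑ j : Fin J, (y 0 j : ℤ) := by
      rw [← Finset.sum_sub_distrib]
    rw [h2, h1]; ring
  have hwZ : ∑ j : Fin J, ((j : ℕ) : ℤ) * d j = 0 := by
    have h1 : (∑ j : Fin J, (((j : ℕ) : ℤ) + 1) * (x 0 j : ℤ))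
        = ∑ j : Fin J, (((j : ℕ) : ℤ) + 1) * (y 0 j : ℤ) := by
      exact_mod_cast hwsum
    have h3 : ∑ j : Fin J, (((j : ℕ) : ℤ) + 1) * d j = 0 := by
      have h4 : ∀ j ∈ (Finset.univ : Finset (Fin J)), (((j : ℕ) : ℤ) + 1) * d j
          = (((j : ℕ) : ℤ) + 1) * (x 0 j : ℤ) - (((j : ℕ) : ℤ) + 1) * (y 0 j : ℤ) :=
        fun j _ => by rw [hdj j]; ring
      rw [Finset.sum_congr rfl h4, Finset.sum_sub_distrib, h1]; ring
    have h5 : ∀ j ∈ (Finset.univ : Finset (Fin J)), ((j : ℕ) : ℤ) * d j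
        = (((j : ℕ) : ℤ) + 1) * d j - d j := fun j _ => by ring
    rw [Finset.sum_congr rfl h5, Finset.sum_sub_distrib, h3, hsZ]; ring
  have hneJ : ∃ j : Fin J, d j ≠ 0 := by
    by_contra h
    push_neg at h
    apply hxy
    funext i j
    have h0 : x 0 j = y 0 j := by
      have := h j
      rw [hdj j] at this
      omega
    have h1 : x 1 j = y 1 j := by
      have := hcol j
      omega
    fin_cases i
    · exact h0
    · exact h1
  set D : ℕ → ℤ := fun n => if h : n < J then d ⟨n, h⟩ else 0 with hD
  have hD0 : ∀ n, J ≤ n → D n = 0 := fun n hn => dif_neg (by omega)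
  have hDeq : ∀ j : Fin J, D (j : ℕ) = d j := fun j => by
    rw [hD]
    simp only [Fin.is_lt, dif_pos, Fin.eta]
  have hDs : ∑ n ∈ Finset.range J, D n = 0 := by
    rw [← Fin.sum_univ_eq_sum_range (fun n => D n) J,
      Finset.sum_congr rfl (fun j _ => hDeq j), hsZ]
  have hDm : ∑ n ∈ Finset.range J, (n : ℤ) * D n = 0 := by
    rw [← Fin.sum_univ_eq_sum_range (fun n => (n : ℤ) * D n) J,
      Finset.sum_congr rfl (fun j (_ : j ∈ Finset.univ) => by rw [hDeq j]), hwZ]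
  have hDne : ∃ n, D n ≠ 0 := by
    obtain ⟨j, hj⟩ := hneJ
    exact ⟨(j : ℕ), by rw [hDeq j]; exact hj⟩
  obtain ⟨p, q, r, s, hpq, hqr, hrs, hsJ, hgap, hcond⟩ := comb J D hD0 hDne hDs hDm
  have hpJ : p < J := by omega
  have hqJ : q < J := by omega
  have hrJ : r < J := by omega
  set Pf : Fin J := ⟨p, hpJ⟩ with hPf
  set Qf : Fin J := ⟨q, hqJ⟩ with hQf
  set Rf : Fin J := ⟨r, hrJ⟩ with hRf
  set Sf : Fin J := ⟨s, hsJ⟩ with hSf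
  have eqp : D p = (x 0 Pf : ℤ) - y 0 Pf := by rw [show p = (Pf : ℕ) from rfl, hDeq Pf, hdj]
  have eqq : D q = (x 0 Qf : ℤ) - y 0 Qf := by rw [show q = (Qf : ℕ) from rfl, hDeq Qf, hdj]
  have eqr : D r = (x 0 Rf : ℤ) - y 0 Rf := by rw [show r = (Rf : ℕ) from rfl, hDeq Rf, hdj]
  have eqs : D s = (x 0 Sf : ℤ) - y 0 Sf := by rw [show s = (Sf : ℕ) from rfl, hDeq Sf, hdj]
  have hQRf : Qf = Rf → q = r := fun h => by
    have := congrArg Fin.val h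
    simpa using this
  rcases hcond with ⟨c1, c2, c3, c4, c5, c6⟩ | ⟨c1, c2, c3, c4, c5, c6⟩
  · exact key J x y hcol hpos Pf Qf Rf Sf hpq hqr hrs (by simpa using hgap)
      (by rw [← eqq]; exact c1) (by rw [← eqr]; exact c2)
      (fun h => by rw [← eqq]; exact c3 (hQRf h))
      (by rw [← eqp]; exact c4) (by rw [← eqs]; exact c5)
      (by rw [← eqp, ← eqs]; exact c6)
  · have hcol' : ∀ j, y 0 j + y 1 j = x 0 j + x 1 j := fun j => (hcol j).symm
    have hpos' : ∀ j, 0 < y 0 j + y 1 j := fun j => by rw [← hcol j]; exact hpos j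
    obtain ⟨z, hzB, hcase⟩ := key J y x hcol' hpos' Pf Qf Rf Sf hpq hqr hrs
      (by simpa using hgap)
      (by have := eqq; omega) (by have := eqr; omega)
      (fun h => by have := c3 (hQRf h); have := eqq; omega)
      (by have := eqp; omega) (by have := eqs; omega)
      (by have h1 := eqp; have h2 := eqs; omega)
    refine ⟨z, hzB, ?_⟩
    have sB : (∑ i : Fin 2, ∑ j : Fin J, |(y i j : ℤ) - (x i j : ℤ)|)
        = ∑ i : Fin 2, ∑ j : Fin J, |(x i j : ℤ) - (y i j : ℤ)| :=
      Finset.sum_congr rfl (fun i _ => Finset.sum_congr rfl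
        (fun j _ => abs_sub_comm _ _))
    rcases hcase with ⟨h1, h2⟩ | ⟨h1, h2⟩
    · right
      refine ⟨h1, ?_⟩
      have sA : (∑ i : Fin 2, ∑ j : Fin J, |(x i j : ℤ) - ((y i j : ℤ) + z i j)|)
          = ∑ i : Fin 2, ∑ j : Fin J, |((y i j : ℤ) + z i j) - (x i j : ℤ)| :=
        Finset.sum_congr rfl (fun i _ => Finset.sum_congr rfl
          (fun j _ => abs_sub_comm _ _))
      rw [sA, ← sB]
      exact h2
    · left
      refine ⟨h1, ?_⟩
      have sA : (∑ i : Fin 2, ∑ j : Fin J, |((x i j : ℤ) + z i j) - (y i j : ℤ)|)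
          = ∑ i : Fin 2, ∑ j : Fin J, |(y i j : ℤ) - ((x i j : ℤ) + z i j)| :=
        Finset.sum_congr rfl (fun i _ => Finset.sum_congr rfl
          (fun j _ => abs_sub_comm _ _))
      rw [sA, ← sB]
      exact h2
end

section
/- Define B₀ = { ±(E_{j1} + E_{j4} − E_{j1+1} − E_{j4−1}) : 1 ≤ j1, j1 + 2 ≤ j4 ≤ J } (the moves of B_Λ with j2 = j1 + 1 and j3 = j4 − 1). Then B₀ connects every fiber of the univariate logistic regression model with all column sums positive: for any x, y ∈ ℕ^{2×J} in the same fiber with x_{+j} = y_{+j} > 0 for all j, there is a finite sequence x = x^0, x^1, …, x^n = y of tables in ℕ^{2×J} with x^{i+1} − x^i ∈ B₀ for every i. -/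
/-- B₀ = { ±(E_{j1} + E_{j4} − E_{j1+1} − E_{j4−1}) : 1 ≤ j1, j1+2 ≤ j4 ≤ J },
the moves of B_Λ with j2 = j1 + 1 and j3 = j4 − 1. -/
def LogisB0 (J : ℕ) : Set (Fin 2 → Fin J → ℤ) :=
  {z | ∃ j1 j2 j3 j4 : Fin J,
    (j2 : ℕ) = (j1 : ℕ) + 1 ∧ (j3 : ℕ) + 1 = (j4 : ℕ) ∧ (j1 : ℕ) + 2 ≤ (j4 : ℕ) ∧
    (z = LogisE J j1 + LogisE J j4 - LogisE J j2 - LogisE J j3 ∨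
     z = -(LogisE J j1 + LogisE J j4 - LogisE J j2 - LogisE J j3))}

open Finset

namespace LogisAux

/-- squeeze feasibility: columns `p` and `q` lose a ball, `p+1` and `q-1` gain one. -/
def Feas (J : ℕ) (n u : ℕ → ℕ) (p q : ℕ) : Prop :=
  p + 2 ≤ q ∧ q < J ∧ 1 ≤ u p ∧ 1 ≤ u q ∧
    u (p+1) + 1 ≤ n (p+1) ∧ u (q-1) + 1 ≤ n (q-1) ∧
    (p + 1 = q - 1 → u (p+1) + 2 ≤ n (p+1))

def squeezed (u : ℕ → ℕ) (p q : ℕ) : ℕ → ℕ := fun j =>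
  u j - (if j = p then 1 else 0) - (if j = q then 1 else 0)
    + (if j = p+1 then 1 else 0) + (if j = q-1 then 1 else 0)

def Good (J : ℕ) (n : ℕ → ℕ) (u : ℕ → ℕ) : Prop :=
  (∀ j, j < J → u j ≤ n j) ∧ (∀ j, J ≤ j → u j = 0)

def SqueezeFree (J : ℕ) (n u : ℕ → ℕ) : Prop := ∀ p q, ¬ Feas J n u p q

/-- pointwise characterization of squeezed, safe wrt ℕ-subtraction -/
lemma squeezed_ptwise {J : ℕ} {n u : ℕ → ℕ} {p q : ℕ} (h : Feas J n u p q) (j : ℕ) :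
    squeezed u p q j + (if j = p then 1 else 0) + (if j = q then 1 else 0)
      = u j + (if j = p+1 then 1 else 0) + (if j = q-1 then 1 else 0) := by
  obtain ⟨h1, h2, h3, h4, h5, h6, h7⟩ := h
  obtain ⟨m, rfl⟩ : ∃ m, q = m + 1 := ⟨q - 1, by omega⟩
  simp only [squeezed, Nat.add_sub_cancel] at *
  split_ifs <;> subst_vars <;> omega

lemma squeezed_good {J : ℕ} {n u : ℕ → ℕ} {p q : ℕ} (hg : Good J n u) (h : Feas J n u p q) :
    Good J n (squeezed u p q) := by
  obtain ⟨h1, h2, h3, h4, h5, h6, h7⟩ := h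
  obtain ⟨m, rfl⟩ : ∃ m, q = m + 1 := ⟨q - 1, by omega⟩
  simp only [Nat.add_sub_cancel] at h6 h7
  obtain ⟨hb, hs⟩ := hg
  constructor
  · intro j hj
    have := hb j hj
    simp only [squeezed, Nat.add_sub_cancel]
    split_ifs <;> subst_vars <;> omega
  · intro j hj
    have h0 := hs j hj
    have hpj : p + 1 < J := by omega
    simp only [squeezed, Nat.add_sub_cancel]
    split_ifs <;> subst_vars <;> omega


lemma sum_squeezed_weighted {J : ℕ} {n u : ℕ → ℕ} {p q : ℕ} (h : Feas J n u p q) (w : ℕ → ℕ) :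
    (∑ j ∈ range J, w j * squeezed u p q j) + w p + w q
      = (∑ j ∈ range J, w j * u j) + w (p+1) + w (q-1) := by
  obtain ⟨h1, h2⟩ : p + 2 ≤ q ∧ q < J := ⟨h.1, h.2.1⟩
  have key : ∀ j, w j * squeezed u p q j + (if j = p then w p else 0) + (if j = q then w q else 0)
      = w j * u j + (if j = p+1 then w (p+1) else 0) + (if j = q-1 then w (q-1) else 0) := by
    intro j
    have hj := squeezed_ptwise h j
    have expand : w j * (squeezed u p q j + (if j = p then 1 else 0) + (if j = q then 1 else 0))
        = w j * (u j + (if j = p+1 then 1 else 0) + (if j = q-1 then 1 else 0)) := by rw [hj]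
    have e1 : ∀ b : ℕ, w j * (if j = b then 1 else 0) = (if j = b then w b else 0) := by
      intro b; split_ifs with hb; · subst hb; ring
      · ring
    calc w j * squeezed u p q j + (if j = p then w p else 0) + (if j = q then w q else 0)
        = w j * (squeezed u p q j + (if j = p then 1 else 0) + (if j = q then 1 else 0)) := by
          rw [mul_add, mul_add, e1, e1]
      _ = w j * (u j + (if j = p+1 then 1 else 0) + (if j = q-1 then 1 else 0)) := expand
      _ = w j * u j + (if j = p+1 then w (p+1) else 0) + (if j = q-1 then w (q-1) else 0) := by
          rw [mul_add, mul_add, e1, e1]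
  have hsum := Finset.sum_congr rfl (fun j (_ : j ∈ range J) => key j)
  rw [Finset.sum_add_distrib, Finset.sum_add_distrib, Finset.sum_add_distrib,
    Finset.sum_add_distrib] at hsum
  rw [Finset.sum_ite_eq' (range J) p (fun _ => w p),
    Finset.sum_ite_eq' (range J) q (fun _ => w q),
    Finset.sum_ite_eq' (range J) (p+1) (fun _ => w (p+1)),
    Finset.sum_ite_eq' (range J) (q-1) (fun _ => w (q-1))] at hsum
  simp only [mem_range, if_pos (show p < J by omega), if_pos (show q < J by omega),
    if_pos (show p+1 < J by omega), if_pos (show q-1 < J by omega)] at hsum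
  exact hsum

lemma sum_squeezed {J : ℕ} {n u : ℕ → ℕ} {p q : ℕ} (h : Feas J n u p q) :
    ∑ j ∈ range J, squeezed u p q j = ∑ j ∈ range J, u j := by
  have := sum_squeezed_weighted h (fun _ => 1)
  simpa using this

lemma wsum_squeezed {J : ℕ} {n u : ℕ → ℕ} {p q : ℕ} (h : Feas J n u p q) :
    ∑ j ∈ range J, (j+1) * squeezed u p q j = ∑ j ∈ range J, (j+1) * u j := by
  obtain ⟨h1, h2⟩ : p + 2 ≤ q ∧ q < J := ⟨h.1, h.2.1⟩
  have := sum_squeezed_weighted h (fun j => j + 1)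
  omega

lemma phi_squeezed {J : ℕ} {n u : ℕ → ℕ} {p q : ℕ} (h : Feas J n u p q) :
    ∑ j ∈ range J, (j+1)^2 * squeezed u p q j < ∑ j ∈ range J, (j+1)^2 * u j := by
  obtain ⟨h1, h2⟩ : p + 2 ≤ q ∧ q < J := ⟨h.1, h.2.1⟩
  have key := sum_squeezed_weighted h (fun j => (j+1)^2)
  have hq : q - 1 + 1 = q := by omega
  rw [hq] at key
  nlinarith [key, sq_nonneg (q - p)]

lemma two_defects {f : ℕ → ℕ} {s : Finset ℕ} (h : 2 ≤ ∑ c ∈ s, f c) :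
    (∃ c ∈ s, 2 ≤ f c) ∨ ∃ c1 ∈ s, ∃ c2 ∈ s, c1 < c2 ∧ 1 ≤ f c1 ∧ 1 ≤ f c2 := by
  by_contra hc
  push_neg at hc
  obtain ⟨hone, htwo⟩ := hc
  set s' := s.filter (fun c => f c ≠ 0) with hs'
  have hsum : ∑ c ∈ s', f c = ∑ c ∈ s, f c := Finset.sum_filter_ne_zero s
  have hcard : s'.card ≤ 1 := by
    by_contra hcard
    push_neg at hcard
    obtain ⟨a, ha, b, hb, hab⟩ := Finset.one_lt_card.mp hcard
    have ha' := Finset.mem_filter.mp ha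
    have hb' := Finset.mem_filter.mp hb
    rcases lt_or_gt_of_ne hab with hlt | hgt
    · have := htwo a ha'.1 b hb'.1 hlt (by omega)
      omega
    · have := htwo b hb'.1 a ha'.1 hgt (by omega)
      omega
  have hle : ∑ c ∈ s', f c ≤ s'.card • 1 := by
    refine Finset.sum_le_card_nsmul s' f 1 ?_
    intro x hx
    have hx' := Finset.mem_filter.mp hx
    have := hone x hx'.1
    omega
  simp only [smul_eq_mul, mul_one] at hle
  omega

lemma find_squeeze {J : ℕ} {n u : ℕ → ℕ} (hn : ∀ j, j < J → 1 ≤ n j) (hg : Good J n u)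
    {a c1 c2 r : ℕ}
    (hac : a < c1) (hc12 : c1 ≤ c2) (hc2J : c2 < J) (hcr : c2 < r)
    (hua : 1 ≤ u a) (hur : 1 ≤ u r)
    (hd1 : u c1 + 1 ≤ n c1) (hd2 : u c2 + 1 ≤ n c2)
    (hd : c1 = c2 → u c1 + 2 ≤ n c1) :
    ∃ p q, Feas J n u p q := by
  classical
  obtain ⟨c0, rfl⟩ : ∃ c0, c1 = c0 + 1 := ⟨c1 - 1, by omega⟩
  obtain ⟨p, hup, hple, hgr⟩ :
      ∃ p, 1 ≤ u p ∧ p ≤ c0 ∧ ∀ k, p < k → k ≤ c0 → u k = 0 := by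
    refine ⟨Nat.findGreatest (fun j => 1 ≤ u j) c0, ?_, Nat.findGreatest_le _, ?_⟩
    · exact Nat.findGreatest_spec (P := fun j => 1 ≤ u j) (show a ≤ c0 by omega) hua
    · intro k h1 h2
      have := Nat.findGreatest_is_greatest h1 h2
      omega
  obtain ⟨r', hcr', hur', hrmin⟩ :
      ∃ r', c2 < r' ∧ 1 ≤ u r' ∧ ∀ k, k < r' → ¬(c2 < k ∧ 1 ≤ u k) := by
    have hex : ∃ j, c2 < j ∧ 1 ≤ u j := ⟨r, hcr, hur⟩
    exact ⟨Nat.find hex, (Nat.find_spec hex).1, (Nat.find_spec hex).2,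
      fun k hk => Nat.find_min hex hk⟩
  have hr'J : r' < J := by
    by_contra hJ
    have := hg.2 r' (by omega)
    omega
  refine ⟨p, r', ?_, hr'J, hup, hur', ?_, ?_, ?_⟩
  · omega
  · -- room at p+1
    rcases eq_or_lt_of_le (show p + 1 ≤ c0 + 1 by omega) with he | hlt
    · rw [he]; exact hd1
    · have h0 : u (p+1) = 0 := hgr (p+1) (by omega) (by omega)
      have h1 : 1 ≤ n (p+1) := hn _ (by omega)
      omega
  · -- room at r'-1
    rcases eq_or_lt_of_le (show c2 ≤ r' - 1 by omega) with he | hlt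
    · rw [← he]; exact hd2
    · have h0 : ¬(c2 < r' - 1 ∧ 1 ≤ u (r'-1)) := hrmin (r'-1) (by omega)
      have h1 : 1 ≤ n (r'-1) := hn _ (by omega)
      omega
  · -- coincidence
    intro hco
    have he1 : p + 1 = c0 + 1 := by omega
    have he2 : (c0 + 1 : ℕ) = c2 := by omega
    rw [he1]
    exact hd he2

lemma sf_structure {J : ℕ} {n u : ℕ → ℕ} (hn : ∀ j, j < J → 1 ≤ n j) (hg : Good J n u)
    (hsf : SqueezeFree J n u) {a m : ℕ} (ha : 1 ≤ u a) (ham : a ≤ m) (hm : m < J) :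
    (∑ j ∈ Ico (a+1) (m+1), (n j - u j)) ≤ 1 ∨ (∀ r, m < r → u r = 0) := by
  by_contra hcon
  push_neg at hcon
  obtain ⟨hdef, r, hmr, hur⟩ := hcon
  have hur : 1 ≤ u r := by omega
  rcases two_defects (by omega : 2 ≤ ∑ c ∈ Ico (a+1) (m+1), (n c - u c)) with
    ⟨c, hcs, hc2⟩ | ⟨c1, h1s, c2, h2s, hlt, hf1, hf2⟩
  · rw [Finset.mem_Ico] at hcs
    obtain ⟨pp, qq, hfeas⟩ := find_squeeze hn hg (a := a) (c1 := c) (c2 := c)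
      (by omega) (le_refl c) (by omega) (show c < r by omega) ha hur
      (by omega) (by omega) (fun _ => by omega)
    exact hsf pp qq hfeas
  · rw [Finset.mem_Ico] at h1s h2s
    obtain ⟨pp, qq, hfeas⟩ := find_squeeze hn hg (a := a) (c1 := c1) (c2 := c2)
      (by omega) (le_of_lt hlt) (by omega) (show c2 < r by omega) ha hur
      (by omega) (by omega) (fun h => absurd h (by omega))
    exact hsf pp qq hfeas

lemma abel_sum (u : ℕ → ℕ) (K : ℕ) :
    ∑ j ∈ range K, (j+1) * u j = ∑ m ∈ range K, ∑ j ∈ Ico m K, u j := by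
  induction K with
  | zero => simp
  | succ K ih =>
    rw [Finset.sum_range_succ]
    have hinner : ∀ m ∈ range (K+1), ∑ j ∈ Ico m (K+1), u j = (∑ j ∈ Ico m K, u j) + u K := by
      intro m hm
      exact Finset.sum_Ico_succ_top (Nat.lt_succ_iff.mp (mem_range.mp hm)) u
    rw [show (∑ m ∈ range (K+1), ∑ j ∈ Ico m (K+1), u j)
        = ∑ m ∈ range (K+1), ((∑ j ∈ Ico m K, u j) + u K) from Finset.sum_congr rfl hinner]
    rw [Finset.sum_add_distrib, Finset.sum_const, card_range, smul_eq_mul]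
    rw [Finset.sum_range_succ (fun m => ∑ j ∈ Ico m K, u j) K]
    simp only [Finset.Ico_self, Finset.sum_empty, add_zero]
    rw [ih]

lemma sf_discrepancy_false {J : ℕ} {n u v : ℕ → ℕ} (hn : ∀ j, j < J → 1 ≤ n j)
    (hgu : Good J n u) (hgv : Good J n v) (hsfu : SqueezeFree J n u)
    (hS : ∑ j ∈ range J, u j = ∑ j ∈ range J, v j)
    (hW : ∑ j ∈ range J, (j+1) * u j = ∑ j ∈ range J, (j+1) * v j)
    {a : ℕ} (hagree : ∀ j, j < a → u j = v j) (hlt : v a < u a) : False := by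
  have haJ : a < J := by
    by_contra hc
    have := hgu.2 a (by omega)
    omega
  have hpa : ∑ j ∈ range a, u j = ∑ j ∈ range a, v j :=
    Finset.sum_congr rfl (fun j hj => hagree j (mem_range.mp hj))
  rcases eq_or_lt_of_le (show a + 1 ≤ J by omega) with ha1 | ha1
  · -- a is the last column : contradiction with total sums
    rw [← ha1, Finset.sum_range_succ, Finset.sum_range_succ, hpa] at hS
    omega
  -- prefix dominance
  have hdom : ∀ m, m < J → ∑ j ∈ range (m+1), v j ≤ ∑ j ∈ range (m+1), u j := by
    intro m hm
    rcases lt_or_ge m a with hma | ham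
    · exact le_of_eq (Finset.sum_congr rfl (fun j hj => (hagree j (by
        have := mem_range.mp hj; omega)).symm))
    · have hsplitu : ∑ j ∈ range (a+1), u j + ∑ j ∈ Ico (a+1) (m+1), u j
          = ∑ j ∈ range (m+1), u j := by
        simp only [Finset.range_eq_Ico]
        exact Finset.sum_Ico_consecutive u (by omega) (by omega)
      have hsplitv : ∑ j ∈ range (a+1), v j + ∑ j ∈ Ico (a+1) (m+1), v j
          = ∑ j ∈ range (m+1), v j := by
        simp only [Finset.range_eq_Ico]
        exact Finset.sum_Ico_consecutive v (by omega) (by omega)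
      have hau : ∑ j ∈ range (a+1), u j = ∑ j ∈ range a, u j + u a := Finset.sum_range_succ u a
      have hav : ∑ j ∈ range (a+1), v j = ∑ j ∈ range a, v j + v a := Finset.sum_range_succ v a
      rcases sf_structure hn hgu hsfu (show 1 ≤ u a by omega) ham hm with hdef | htail
      · have hIv : ∑ j ∈ Ico (a+1) (m+1), v j ≤ ∑ j ∈ Ico (a+1) (m+1), n j := by
          refine Finset.sum_le_sum ?_
          intro j hj
          rw [Finset.mem_Ico] at hj
          exact hgv.1 j (by omega)
        have hIu : ∑ j ∈ Ico (a+1) (m+1), u j + ∑ j ∈ Ico (a+1) (m+1), (n j - u j)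
            = ∑ j ∈ Ico (a+1) (m+1), n j := by
          rw [← Finset.sum_add_distrib]
          refine Finset.sum_congr rfl ?_
          intro j hj
          rw [Finset.mem_Ico] at hj
          have := hgu.1 j (by omega)
          omega
        omega
      · have h0 : ∑ j ∈ Ico (m+1) J, u j = 0 := by
          refine Finset.sum_eq_zero ?_
          intro j hj
          rw [Finset.mem_Ico] at hj
          exact htail j (by omega)
        have h1 : ∑ j ∈ range (m+1), u j + ∑ j ∈ Ico (m+1) J, u j = ∑ j ∈ range J, u j := by
          simp only [Finset.range_eq_Ico]
          exact Finset.sum_Ico_consecutive u (by omega) (by omega)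
        have h2 : ∑ j ∈ range (m+1), v j ≤ ∑ j ∈ range J, v j :=
          Finset.sum_le_sum_of_subset (Finset.range_subset_range.mpr (by omega))
        omega
  -- strictness at a
  have hstrict : ∑ j ∈ range (a+1), v j < ∑ j ∈ range (a+1), u j := by
    rw [Finset.sum_range_succ, Finset.sum_range_succ, hpa]
    omega
  -- inner prefix sums comparison
  have hAlt : ∑ m ∈ range J, ∑ j ∈ range m, v j < ∑ m ∈ range J, ∑ j ∈ range m, u j := by
    refine Finset.sum_lt_sum ?_ ⟨a+1, mem_range.mpr (by omega), hstrict⟩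
    intro m hm
    rcases Nat.eq_zero_or_pos m with rfl | hp
    · simp
    · have := hdom (m-1) (by have := mem_range.mp hm; omega)
      rwa [Nat.sub_add_cancel hp] at this
  -- Abel
  have hTu : ∀ m ∈ range J, (∑ j ∈ Ico m J, u j) + ∑ j ∈ range m, u j = ∑ j ∈ range J, u j := by
    intro m hm
    simp only [Finset.range_eq_Ico]
    rw [add_comm]
    exact Finset.sum_Ico_consecutive u (by omega) (by have := mem_range.mp hm; omega)
  have hTv : ∀ m ∈ range J, (∑ j ∈ Ico m J, v j) + ∑ j ∈ range m, v j = ∑ j ∈ range J, v j := by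
    intro m hm
    simp only [Finset.range_eq_Ico]
    rw [add_comm]
    exact Finset.sum_Ico_consecutive v (by omega) (by have := mem_range.mp hm; omega)
  have htotu : ∑ j ∈ range J, (j+1) * u j + ∑ m ∈ range J, ∑ j ∈ range m, u j
      = J * ∑ j ∈ range J, u j := by
    rw [abel_sum, ← Finset.sum_add_distrib]
    rw [Finset.sum_congr rfl hTu, Finset.sum_const, card_range, smul_eq_mul]
  have htotv : ∑ j ∈ range J, (j+1) * v j + ∑ m ∈ range J, ∑ j ∈ range m, v j
      = J * ∑ j ∈ range J, v j := by
    rw [abel_sum, ← Finset.sum_add_distrib]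
    rw [Finset.sum_congr rfl hTv, Finset.sum_const, card_range, smul_eq_mul]
  rw [hS] at htotu
  omega

lemma sf_unique {J : ℕ} {n u v : ℕ → ℕ} (hn : ∀ j, j < J → 1 ≤ n j)
    (hgu : Good J n u) (hgv : Good J n v)
    (hsfu : SqueezeFree J n u) (hsfv : SqueezeFree J n v)
    (hS : ∑ j ∈ range J, u j = ∑ j ∈ range J, v j)
    (hW : ∑ j ∈ range J, (j+1) * u j = ∑ j ∈ range J, (j+1) * v j) : u = v := by
  classical
  by_contra hc
  have hex : ∃ j, u j ≠ v j := by
    by_contra h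
    push_neg at h
    exact hc (funext h)
  have hne := Nat.find_spec hex
  have hagree : ∀ j, j < Nat.find hex → u j = v j := by
    intro j hj
    have := Nat.find_min hex hj
    omega
  rcases lt_or_gt_of_ne hne with h | h
  · exact sf_discrepancy_false hn hgv hgu hsfv hS.symm hW.symm
      (fun j hj => (hagree j hj).symm) h
  · exact sf_discrepancy_false hn hgu hgv hsfu hS hW hagree h

def Rel (J : ℕ) (n : ℕ → ℕ) (u u' : ℕ → ℕ) : Prop :=
  Good J n u ∧ ∃ p q, Feas J n u p q ∧ u' = squeezed u p q

lemma normalize {J : ℕ} {n : ℕ → ℕ} (hn : ∀ j, j < J → 1 ≤ n j) :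
    ∀ N (u : ℕ → ℕ), (∑ j ∈ range J, (j+1)^2 * u j) ≤ N → Good J n u →
    ∃ w, Relation.ReflTransGen (Rel J n) u w ∧ Good J n w ∧ SqueezeFree J n w ∧
      (∑ j ∈ range J, w j = ∑ j ∈ range J, u j) ∧
      (∑ j ∈ range J, (j+1) * w j = ∑ j ∈ range J, (j+1) * u j) := by
  intro N
  induction N with
  | zero =>
    intro u hphi hg
    by_cases hsf : SqueezeFree J n u
    · exact ⟨u, Relation.ReflTransGen.refl, hg, hsf, rfl, rfl⟩
    · exfalso
      simp only [SqueezeFree, not_forall, not_not] at hsf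
      obtain ⟨p, q, hf⟩ := hsf
      have := phi_squeezed hf
      omega
  | succ N ih =>
    intro u hphi hg
    by_cases hsf : SqueezeFree J n u
    · exact ⟨u, Relation.ReflTransGen.refl, hg, hsf, rfl, rfl⟩
    · simp only [SqueezeFree, not_forall, not_not] at hsf
      obtain ⟨p, q, hf⟩ := hsf
      have hphi' : (∑ j ∈ range J, (j+1)^2 * squeezed u p q j) ≤ N := by
        have := phi_squeezed hf
        omega
      obtain ⟨w, hw, hgw, hsfw, hSw, hWw⟩ := ih (squeezed u p q) hphi' (squeezed_good hg hf)
      exact ⟨w, Relation.ReflTransGen.head ⟨hg, p, q, hf, rfl⟩ hw, hgw, hsfw,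
        by rw [hSw, sum_squeezed hf], by rw [hWw, wsum_squeezed hf]⟩

theorem core {J : ℕ} {n u v : ℕ → ℕ} (hn : ∀ j, j < J → 1 ≤ n j)
    (hgu : Good J n u) (hgv : Good J n v)
    (hS : ∑ j ∈ range J, u j = ∑ j ∈ range J, v j)
    (hW : ∑ j ∈ range J, (j+1) * u j = ∑ j ∈ range J, (j+1) * v j) :
    ∃ w, Relation.ReflTransGen (Rel J n) u w ∧ Relation.ReflTransGen (Rel J n) v w := by
  obtain ⟨wu, hu, hgwu, hsfu, hSu, hWu⟩ := normalize hn _ u le_rfl hgu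
  obtain ⟨wv, hv, hgwv, hsfv, hSv, hWv⟩ := normalize hn _ v le_rfl hgv
  have heq : wu = wv := sf_unique hn hgwu hgwv hsfu hsfv
    (by rw [hSu, hSv, hS]) (by rw [hWu, hWv, hW])
  exact ⟨wu, hu, heq ▸ hv⟩

def StepB0 (J : ℕ) (x y : Fin 2 → Fin J → ℕ) : Prop :=
  (fun a j => (y a j : ℤ) - (x a j : ℤ)) ∈ LogisB0 J

def Tab (J : ℕ) (n : ℕ → ℕ) (u : ℕ → ℕ) : Fin 2 → Fin J → ℕ :=
  fun a j => if a = 0 then u j else n j - u j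

lemma negB0 {J : ℕ} {z : Fin 2 → Fin J → ℤ} (h : z ∈ LogisB0 J) : -z ∈ LogisB0 J := by
  obtain ⟨j1, j2, j3, j4, c1, c2, c3, hz⟩ := h
  refine ⟨j1, j2, j3, j4, c1, c2, c3, ?_⟩
  rcases hz with h | h
  · right; rw [h]
  · left; rw [h, neg_neg]

lemma stepB0_symm {J : ℕ} : Symmetric (StepB0 J) := by
  intro x y h
  have he : (fun a j => (x a j : ℤ) - y a j) = -(fun a j => (y a j : ℤ) - x a j) := by
    funext a j
    simp only [Pi.neg_apply]
    ring
  show (fun a j => (x a j : ℤ) - y a j) ∈ LogisB0 J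
  rw [he]
  exact negB0 h

lemma rel_step {J : ℕ} {n : ℕ → ℕ} {u u' : ℕ → ℕ} (h : Rel J n u u') :
    StepB0 J (Tab J n u) (Tab J n u') := by
  obtain ⟨hg, p, q, hf, rfl⟩ := h
  have hg' := squeezed_good hg hf
  obtain ⟨hpq, hqJ, hup, huq, hr1, hr2, hr3⟩ := hf
  have hf' : Feas J n u p q := ⟨hpq, hqJ, hup, huq, hr1, hr2, hr3⟩
  have hptZ : ∀ m : ℕ, (squeezed u p q m : ℤ) + (if m = p then 1 else 0)
      + (if m = q then 1 else 0)
      = (u m : ℤ) + (if m = p+1 then 1 else 0) + (if m = q-1 then 1 else 0) := by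
    intro m
    have h := squeezed_ptwise hf' m
    split_ifs at h ⊢ <;> omega
  refine ⟨⟨p, by omega⟩, ⟨p+1, by omega⟩, ⟨q-1, by omega⟩, ⟨q, hqJ⟩,
    rfl, show q - 1 + 1 = q by omega, show p + 2 ≤ q from hpq, Or.inr ?_⟩
  funext a j
  have h := hptZ j.val
  have hbu := hg.1 j.val j.isLt
  have hbu' := hg'.1 j.val j.isLt
  simp only [Pi.neg_apply, Pi.add_apply, Pi.sub_apply, LogisE, Tab, Fin.ext_iff]
  by_cases ha : a = 0
  · subst ha
    simp only [eq_self_iff_true, if_true]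
    split_ifs at h ⊢ <;> omega
  · have ha' : ¬((a : ℕ) = ((0 : Fin 2) : ℕ)) := fun hv => ha (Fin.ext hv)
    simp only [if_neg ha']
    rw [Nat.cast_sub hbu', Nat.cast_sub hbu]
    split_ifs at h ⊢ <;> omega

lemma rtg_path {J : ℕ} {x y : Fin 2 → Fin J → ℕ}
    (h : Relation.ReflTransGen (StepB0 J) x y) :
    ∃ (N : ℕ) (f : Fin (N + 1) → Fin 2 → Fin J → ℕ),
      f 0 = x ∧ f (Fin.last N) = y ∧
      ∀ i : Fin N, StepB0 J (f i.castSucc) (f i.succ) := by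
  induction h with
  | refl => exact ⟨0, fun _ => x, rfl, rfl, fun i => i.elim0⟩
  | tail h1 h2 ih =>
    obtain ⟨N, f, h0, hlast, hsteps⟩ := ih
    refine ⟨N + 1, Fin.snoc f _, ?_, Fin.snoc_last _ _, ?_⟩
    · rw [show (0 : Fin (N+2)) = Fin.castSucc 0 from (Fin.castSucc_zero).symm,
        Fin.snoc_castSucc, h0]
    · intro i
      rcases Fin.eq_castSucc_or_eq_last i with ⟨j, rfl⟩ | rfl
      · rw [Fin.succ_castSucc, Fin.snoc_castSucc, Fin.snoc_castSucc]
        exact hsteps j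
      · rw [Fin.succ_last, Fin.snoc_last, Fin.snoc_castSucc, hlast]
        exact h2
end LogisAux

open LogisAux

/-- B₀ connects every fiber of the univariate logistic
regression model with all column sums positive. -/
theorem B0_connects_positive_fibers_univariate_logistic (J : ℕ) (hJ : 1 ≤ J)
    (x y : Fin 2 → Fin J → ℕ)
    (hsum : ∑ j : Fin J, x 0 j = ∑ j : Fin J, y 0 j)
    (hcol : ∀ j : Fin J, x 0 j + x 1 j = y 0 j + y 1 j)
    (hpos : ∀ j : Fin J, 0 < x 0 j + x 1 j)
    (hwsum : ∑ j : Fin J, ((j : ℕ) + 1) * x 0 j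
           = ∑ j : Fin J, ((j : ℕ) + 1) * y 0 j) :
    ∃ (n : ℕ) (f : Fin (n + 1) → Fin 2 → Fin J → ℕ),
      f 0 = x ∧ f (Fin.last n) = y ∧
      ∀ i : Fin n,
        (fun a j => (f i.succ a j : ℤ) - (f i.castSucc a j : ℤ)) ∈ LogisB0 J := by
  classical
  set nN : ℕ → ℕ := fun j => if h : j < J then x 0 ⟨j, h⟩ + x 1 ⟨j, h⟩ else 0 with hnN
  set uN : ℕ → ℕ := fun j => if h : j < J then x 0 ⟨j, h⟩ else 0 with huN
  set vN : ℕ → ℕ := fun j => if h : j < J then y 0 ⟨j, h⟩ else 0 with hvN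
  have hn : ∀ j, j < J → 1 ≤ nN j := by
    intro j hj
    simp only [hnN, dif_pos hj]
    exact hpos ⟨j, hj⟩
  have hgu : Good J nN uN := by
    constructor
    · intro j hj; simp only [hnN, huN, dif_pos hj]; omega
    · intro j hj; simp only [huN, dif_neg (by omega : ¬ j < J)]
  have hgv : Good J nN vN := by
    constructor
    · intro j hj
      simp only [hnN, hvN, dif_pos hj]
      have := hcol ⟨j, hj⟩
      omega
    · intro j hj; simp only [hvN, dif_neg (by omega : ¬ j < J)]
  have hS : ∑ j ∈ range J, uN j = ∑ j ∈ range J, vN j := by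
    rw [← Fin.sum_univ_eq_sum_range, ← Fin.sum_univ_eq_sum_range]
    calc ∑ i : Fin J, uN i = ∑ i : Fin J, x 0 i := by
          refine Finset.sum_congr rfl fun i _ => ?_
          simp only [huN, dif_pos i.isLt, Fin.eta]
      _ = ∑ i : Fin J, y 0 i := hsum
      _ = ∑ i : Fin J, vN i := by
          refine Finset.sum_congr rfl fun i _ => ?_
          simp only [hvN, dif_pos i.isLt, Fin.eta]
  have hW : ∑ j ∈ range J, (j+1) * uN j = ∑ j ∈ range J, (j+1) * vN j := by
    rw [← Fin.sum_univ_eq_sum_range, ← Fin.sum_univ_eq_sum_range]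
    calc ∑ i : Fin J, ((i : ℕ)+1) * uN i = ∑ i : Fin J, ((i : ℕ)+1) * x 0 i := by
          refine Finset.sum_congr rfl fun i _ => ?_
          simp only [huN, dif_pos i.isLt, Fin.eta]
      _ = ∑ i : Fin J, ((i : ℕ)+1) * y 0 i := hwsum
      _ = ∑ i : Fin J, ((i : ℕ)+1) * vN i := by
          refine Finset.sum_congr rfl fun i _ => ?_
          simp only [hvN, dif_pos i.isLt, Fin.eta]
  have hx : Tab J nN uN = x := by
    funext a j
    simp only [Tab, hnN, huN, dif_pos j.isLt, Fin.eta]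
    fin_cases a <;> simp <;> omega
  have hy : Tab J nN vN = y := by
    funext a j
    have := hcol j
    simp only [Tab, hnN, hvN, dif_pos j.isLt, Fin.eta]
    fin_cases a <;> simp <;> omega
  obtain ⟨w, hu, hv⟩ := core hn hgu hgv hS hW
  have pu : Relation.ReflTransGen (StepB0 J) x (Tab J nN w) := by
    rw [← hx]
    exact Relation.ReflTransGen.lift (Tab J nN) (fun a b hab => rel_step hab) _ _ hu
  have pv : Relation.ReflTransGen (StepB0 J) y (Tab J nN w) := by
    rw [← hy]
    exact Relation.ReflTransGen.lift (Tab J nN) (fun a b hab => rel_step hab) _ _ hv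
  have pxy : Relation.ReflTransGen (StepB0 J) x y :=
    pu.trans (haveI : Std.Symm (StepB0 J) := ⟨stepB0_symm⟩; Std.Symm.symm _ _ pv)
  obtain ⟨N, f, h0, hlast, hsteps⟩ := rtg_path pxy
  exact ⟨N, f, h0, hlast, fun i => hsteps i⟩
end
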